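/- In End(V), set y_0^+ = b*^{−1}B*, y_1^+ = b^{−1}B, y_0^− = a*^{−1}A*, y_1^− = a^{−1}A, k_0 = K, k_0^{−1} = K^{−1}, k_1 = K^{−1}, k_1^{−1} = K. Then these eight operators satisfy the alternate relations, and the only subspaces of V invariant under all eight operators are 0 and V. (In other words, this assignment gives V an irreducible U_q(ŝl_2)-module structure in which the alternate generators act as indicated.) -/

import Mathlib

noncomputable section

open Submodule

variable {K : Type*} [Field K]

/-- `[n]_q = (q^n − q^{−n})/(q − q^{−1})`. -/
def qInt (q : K) (n : ℤ) : K := (q ^ n - q ^ (-n)) / (q - q⁻¹)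

/-- Elements `y₀⁺, y₁⁺, y₀⁻, y₁⁻, k₀, k₀⁻¹, k₁, k₁⁻¹` of a unital associative `K`-algebra
satisfy the alternate relations. -/
structure AlternateRelations (q : K) {A : Type*} [Ring A] [Algebra K A]
    (yp ym k kinv : Fin 2 → A) : Prop where
  k_kinv : ∀ i, k i * kinv i = 1
  kinv_k : ∀ i, kinv i * k i = 1
  central_yp : ∀ i, k 0 * k 1 * yp i = yp i * (k 0 * k 1)
  central_ym : ∀ i, k 0 * k 1 * ym i = ym i * (k 0 * k 1)
  central_k : ∀ i, k 0 * k 1 * k i = k i * (k 0 * k 1)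
  central_kinv : ∀ i, k 0 * k 1 * kinv i = kinv i * (k 0 * k 1)
  rel_yp_k : ∀ i, (q - q⁻¹)⁻¹ • (q • (yp i * k i) - q⁻¹ • (k i * yp i)) = 1
  rel_k_ym : ∀ i, (q - q⁻¹)⁻¹ • (q • (k i * ym i) - q⁻¹ • (ym i * k i)) = 1
  rel_ym_yp : ∀ i, (q - q⁻¹)⁻¹ • (q • (ym i * yp i) - q⁻¹ • (yp i * ym i)) = 1
  rel_yp_ym : ∀ i j, i ≠ j →
    (q - q⁻¹)⁻¹ • (q • (yp i * ym j) - q⁻¹ • (ym j * yp i)) = kinv 0 * kinv 1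
  serre_p : ∀ i j, i ≠ j →
    yp i ^ 3 * yp j - qInt q 3 • (yp i ^ 2 * yp j * yp i)
      + qInt q 3 • (yp i * yp j * yp i ^ 2) - yp j * yp i ^ 3 = 0
  serre_m : ∀ i j, i ≠ j →
    ym i ^ 3 * ym j - qInt q 3 • (ym i ^ 2 * ym j * ym i)
      + qInt q 3 • (ym i * ym j * ym i ^ 2) - ym j * ym i ^ 3 = 0

/-- Elements `e₀⁺, e₁⁺, e₀⁻, e₁⁻, K₀, K₀⁻¹, K₁, K₁⁻¹` of a unital associative `K`-algebra
satisfy the Chevalley relations of `U_q(sl₂ hat)`. -/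
structure ChevalleyRelations (q : K) {A : Type*} [Ring A] [Algebra K A]
    (ep em Kg Kginv : Fin 2 → A) : Prop where
  K_Kinv : ∀ i, Kg i * Kginv i = 1
  Kinv_K : ∀ i, Kginv i * Kg i = 1
  K_comm : Kg 0 * Kg 1 = Kg 1 * Kg 0
  KepK_same : ∀ i, Kg i * ep i * Kginv i = (q ^ (2 : ℤ)) • ep i
  KemK_same : ∀ i, Kg i * em i * Kginv i = (q ^ (-2 : ℤ)) • em i
  KepK_diff : ∀ i j, i ≠ j → Kg i * ep j * Kginv i = (q ^ (-2 : ℤ)) • ep j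
  KemK_diff : ∀ i j, i ≠ j → Kg i * em j * Kginv i = (q ^ (2 : ℤ)) • em j
  e_comm_same : ∀ i, ep i * em i - em i * ep i = (q - q⁻¹)⁻¹ • (Kg i - Kginv i)
  e_comm_diff : ∀ i j, i ≠ j → ep i * em j = em j * ep i
  serre_p : ∀ i j, i ≠ j →
    ep i ^ 3 * ep j - qInt q 3 • (ep i ^ 2 * ep j * ep i)
      + qInt q 3 • (ep i * ep j * ep i ^ 2) - ep j * ep i ^ 3 = 0
  serre_m : ∀ i j, i ≠ j →
    em i ^ 3 * em j - qInt q 3 • (em i ^ 2 * em j * em i)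
      + qInt q 3 • (em i * em j * em i ^ 2) - em j * em i ^ 3 = 0

variable {V : Type*} [AddCommGroup V] [Module K V]

/-- A decomposition of `V` of length `d`: nonzero subspaces `U 0, …, U d`
(indexed by `ℤ`, with `U i = ⊥` outside `[0, d]`) whose direct sum is `V`. -/
structure IsDecomposition (d : ℕ) (U : ℤ → Submodule K V) : Prop where
  bot_of_lt : ∀ i : ℤ, i < 0 → U i = ⊥
  bot_of_gt : ∀ i : ℤ, (d : ℤ) < i → U i = ⊥
  ne_bot : ∀ i : ℤ, 0 ≤ i → i ≤ (d : ℤ) → U i ≠ ⊥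
  indep : iSupIndep U
  sup_eq_top : ⨆ i, U i = ⊤

/-- `A, A*` is a tridiagonal pair on `V` with standard orderings `Vs 0, …, Vs d` and
`Vs' 0, …, Vs' d` of the eigenspaces of `A` resp. `A*`, with corresponding eigenvalues
`θ i` resp. `θ' i`. -/
structure IsTridiagonalPair (A A' : Module.End K V) (d : ℕ)
    (Vs Vs' : ℤ → Submodule K V) (θ θ' : ℤ → K) : Prop where
  decompV : IsDecomposition d Vs
  decompV' : IsDecomposition d Vs'
  eig : ∀ i : ℤ, ∀ v ∈ Vs i, A v = θ i • v
  eig' : ∀ i : ℤ, ∀ v ∈ Vs' i, A' v = θ' i • v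
  theta_inj : ∀ i j : ℤ, 0 ≤ i → i ≤ (d : ℤ) → 0 ≤ j → j ≤ (d : ℤ) → θ i = θ j → i = j
  theta'_inj : ∀ i j : ℤ, 0 ≤ i → i ≤ (d : ℤ) → 0 ≤ j → j ≤ (d : ℤ) → θ' i = θ' j → i = j
  trid : ∀ i : ℤ, (Vs i).map A' ≤ Vs (i - 1) ⊔ Vs i ⊔ Vs (i + 1)
  trid' : ∀ i : ℤ, (Vs' i).map A ≤ Vs' (i - 1) ⊔ Vs' i ⊔ Vs' (i + 1)
  irred : ∀ W : Submodule K V, W.map A ≤ W → W.map A' ≤ W → W = ⊥ ∨ W = ⊤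

/-- The sum `U m + U (m+1) + ⋯ + U n`. -/
def sumIcc (U : ℤ → Submodule K V) (m n : ℤ) : Submodule K V :=
  ⨆ j ∈ Set.Icc m n, U j

/-- Decomposition `[0D]`: the `i`-th subspace is `V_i`. -/
def dec0D (Vs : ℤ → Submodule K V) : ℤ → Submodule K V := Vs

/-- Decomposition `[0*D*]`: the `i`-th subspace is `V*_i`. -/
def dec0sDs (Vs' : ℤ → Submodule K V) : ℤ → Submodule K V := Vs'

/-- Decomposition `[0*D]`: the `i`-th subspace is `(V*_0+⋯+V*_i) ∩ (V_i+⋯+V_d)`. -/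
def dec0sD (d : ℕ) (Vs Vs' : ℤ → Submodule K V) (i : ℤ) : Submodule K V :=
  sumIcc Vs' 0 i ⊓ sumIcc Vs i (d : ℤ)

/-- Decomposition `[0*0]`: the `i`-th subspace is `(V*_0+⋯+V*_i) ∩ (V_0+⋯+V_{d−i})`. -/
def dec0s0 (d : ℕ) (Vs Vs' : ℤ → Submodule K V) (i : ℤ) : Submodule K V :=
  sumIcc Vs' 0 i ⊓ sumIcc Vs 0 ((d : ℤ) - i)

/-- Decomposition `[D*0]`: the `i`-th subspace is `(V*_{d−i}+⋯+V*_d) ∩ (V_0+⋯+V_{d−i})`. -/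
def decDs0 (d : ℕ) (Vs Vs' : ℤ → Submodule K V) (i : ℤ) : Submodule K V :=
  sumIcc Vs' ((d : ℤ) - i) (d : ℤ) ⊓ sumIcc Vs 0 ((d : ℤ) - i)

/-- Decomposition `[D*D]`: the `i`-th subspace is `(V*_{d−i}+⋯+V*_d) ∩ (V_i+⋯+V_d)`. -/
def decDsD (d : ℕ) (Vs Vs' : ℤ → Submodule K V) (i : ℤ) : Submodule K V :=
  sumIcc Vs' ((d : ℤ) - i) (d : ℤ) ⊓ sumIcc Vs i (d : ℤ)

section TDTools
variable {q : K}

lemma qzpow_inj (hq0 : q ≠ 0) (hq : ∀ n : ℕ, 0 < n → q ^ n ≠ 1) {m n : ℤ}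
    (h : q ^ m = q ^ n) : m = n := by
  by_contra hne
  have key : ∀ m n : ℤ, n < m → q ^ m = q ^ n → False := by
    intro m n hlt h
    have h1 : q ^ (m - n) = 1 := by
      rw [zpow_sub₀ hq0, h, div_self (zpow_ne_zero _ hq0)]
    have h2 := hq (m - n).toNat (by omega)
    rw [← zpow_natCast, Int.toNat_of_nonneg (by omega)] at h2
    exact h2 h1
  rcases lt_or_gt_of_ne hne with h' | h'
  · exact key n m h' h.symm
  · exact key m n h' h

lemma qsub_ne (hq0 : q ≠ 0) (hq : ∀ n : ℕ, 0 < n → q ^ n ≠ 1) : q - q⁻¹ ≠ 0 := by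
  intro h
  have h2 : q * q = 1 := by
    have := sub_eq_zero.mp h
    field_simp at this
    linear_combination this
  exact hq 2 (by norm_num) (by rw [pow_two]; exact h2)

lemma le_sumIcc (U : ℤ → Submodule K V) {m n j : ℤ} (h1 : m ≤ j) (h2 : j ≤ n) :
    U j ≤ sumIcc U m n :=
  le_biSup _ (Set.mem_Icc.mpr ⟨h1, h2⟩)

lemma sumIcc_le (U : ℤ → Submodule K V) {m n : ℤ} {W : Submodule K V}
    (h : ∀ j, m ≤ j → j ≤ n → U j ≤ W) : sumIcc U m n ≤ W :=
  iSup₂_le fun j hj => h j (Set.mem_Icc.mp hj).1 (Set.mem_Icc.mp hj).2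

lemma sumIcc_mono (U : ℤ → Submodule K V) {m n m' n' : ℤ} (h1 : m' ≤ m) (h2 : n ≤ n') :
    sumIcc U m n ≤ sumIcc U m' n' :=
  sumIcc_le _ fun j hj1 hj2 => le_sumIcc _ (h1.trans hj1) (hj2.trans h2)

lemma sumIcc_empty (U : ℤ → Submodule K V) {m n : ℤ} (h : n < m) : sumIcc U m n = ⊥ := by
  rw [sumIcc, Set.Icc_eq_empty (by omega : ¬ m ≤ n)]
  simp

lemma sumIcc_self (U : ℤ → Submodule K V) (m : ℤ) : sumIcc U m m = U m := by
  rw [sumIcc, Set.Icc_self]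
  simp

lemma sumIcc_split (U : ℤ → Submodule K V) {m p n : ℤ} (h1 : m ≤ p) (h2 : p ≤ n) :
    sumIcc U m n = sumIcc U m p ⊔ sumIcc U (p+1) n := by
  apply le_antisymm
  · refine sumIcc_le _ fun j hj1 hj2 => ?_
    rcases le_or_gt j p with h | h
    · exact le_sup_of_le_left (le_sumIcc _ hj1 h)
    · exact le_sup_of_le_right (le_sumIcc _ (by omega) hj2)
  · exact sup_le (sumIcc_mono _ le_rfl h2) (sumIcc_mono _ (by omega) le_rfl)

lemma sumIcc_peel_top (U : ℤ → Submodule K V) {m n : ℤ} (h : m ≤ n) :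
    sumIcc U m n = sumIcc U m (n-1) ⊔ U n := by
  rcases eq_or_lt_of_le h with rfl | h'
  · rw [sumIcc_self, sumIcc_empty _ (by omega), bot_sup_eq]
  · rw [sumIcc_split U (by omega : m ≤ n-1) (by omega : n-1 ≤ n),
      show n-1+1 = n by ring, sumIcc_self]

lemma sumIcc_peel_bot (U : ℤ → Submodule K V) {m n : ℤ} (h : m ≤ n) :
    sumIcc U m n = U m ⊔ sumIcc U (m+1) n := by
  rw [sumIcc_split U (le_refl m) h, sumIcc_self]

lemma sumIcc_flip (U : ℤ → Submodule K V) (c : ℤ) (m n : ℤ) :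
    sumIcc (fun i => U (c - i)) m n = sumIcc U (c - n) (c - m) := by
  apply le_antisymm
  · refine sumIcc_le _ fun j hj1 hj2 => ?_
    exact le_sumIcc U (by omega) (by omega)
  · refine sumIcc_le _ fun j hj1 hj2 => ?_
    have e : U j = (fun i => U (c - i)) (c - j) := by
      simp only []
      rw [sub_sub_cancel]
    rw [e]
    exact le_sumIcc (fun i => U (c - i)) (by omega) (by omega)

end TDTools

section DecTools
variable {q : K} {d : ℕ}

lemma IsDecomposition.sumIcc_top {U : ℤ → Submodule K V} (hU : IsDecomposition d U) :
    sumIcc U 0 (d:ℤ) = ⊤ := by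
  apply le_antisymm le_top
  rw [← hU.sup_eq_top]
  refine iSup_le fun i => ?_
  rcases lt_or_ge i 0 with h | h
  · exact (hU.bot_of_lt i h) ▸ bot_le
  rcases le_or_gt i (d:ℤ) with h2 | h2
  · exact le_sumIcc _ h h2
  · exact (hU.bot_of_gt i h2) ▸ bot_le

lemma IsDecomposition.disjoint_block {U : ℤ → Submodule K V} (hU : IsDecomposition d U)
    {i : ℤ} {W : Submodule K V} (hW : W ≤ ⨆ j, ⨆ _ : j ≠ i, U j) : U i ⊓ W = ⊥ :=
  disjoint_iff.mp ((hU.indep i).mono_right hW)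

lemma IsDecomposition.sumIcc_le' {U : ℤ → Submodule K V} (hU : IsDecomposition d U)
    {m n m' n' : ℤ} (hm : m' ≤ m ∨ m' ≤ 0) (hn : n ≤ n' ∨ (d:ℤ) ≤ n') :
    sumIcc U m n ≤ sumIcc U m' n' := by
  refine sumIcc_le _ fun j h1 h2 => ?_
  rcases lt_or_ge j 0 with h | h
  · exact (hU.bot_of_lt j h) ▸ bot_le
  rcases lt_or_ge (d:ℤ) j with h' | h'
  · exact (hU.bot_of_gt j h') ▸ bot_le
  exact le_sumIcc _ (by omega) (by omega)

lemma IsDecomposition.flip {U : ℤ → Submodule K V} (hU : IsDecomposition d U) :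
    IsDecomposition d (fun i => U ((d:ℤ) - i)) where
  bot_of_lt i h := hU.bot_of_gt _ (by omega)
  bot_of_gt i h := hU.bot_of_lt _ (by omega)
  ne_bot i h1 h2 := hU.ne_bot _ (by omega) (by omega)
  indep := by
    intro i
    refine (hU.indep ((d:ℤ) - i)).mono_right ?_
    refine iSup_le fun j => iSup_le fun hj => ?_
    exact le_iSup₂ (f := fun j (_ : j ≠ (d:ℤ) - i) => U j) ((d:ℤ) - j) (by omega)
  sup_eq_top := by
    rw [← hU.sup_eq_top]
    apply le_antisymm
    · exact iSup_le fun i => le_iSup U ((d:ℤ) - i)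
    · refine iSup_le fun i => ?_
      have e : U i = (fun j => U ((d:ℤ) - j)) ((d:ℤ) - i) := by
        simp only []
        rw [sub_sub_cancel]
      rw [e]
      exact le_iSup (fun j => U ((d:ℤ) - j)) ((d:ℤ) - i)

/-- Separation lemma: if `(T - c)w` lands in block `m` (up to blocks `m`,`k`) and the only
eigen-index matching `c` is `k`, then `w` lies in blocks `m ⊔ k`. -/
lemma sep_lemma {T : Module.End K V} {U : ℤ → Submodule K V} {θ : ℤ → K}
    (hU : IsDecomposition d U) (eig : ∀ i : ℤ, ∀ v ∈ U i, T v = θ i • v)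
    {c : K} {m k : ℤ}
    (hc : ∀ j : ℤ, 0 ≤ j → j ≤ (d:ℤ) → θ j = c → j = k)
    {w : V} (hw : T w - c • w ∈ U m ⊔ U k) : w ∈ U m ⊔ U k := by
  have diag_pres : ∀ (p r : ℤ) (u : V), u ∈ sumIcc U p r → T u ∈ sumIcc U p r := by
    intro p r u hu
    have : sumIcc U p r ≤ Submodule.comap T (sumIcc U p r) := by
      refine sumIcc_le _ fun j h1 h2 => fun x hx => ?_
      rw [Submodule.mem_comap, eig j x hx]
      exact Submodule.smul_mem _ _ (le_sumIcc _ h1 h2 hx)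
    exact this hu
  suffices h : ∀ n : ℕ, ∀ w : V, w ∈ sumIcc U 0 ((n:ℤ) - 1) →
      T w - c • w ∈ U m ⊔ U k → w ∈ U m ⊔ U k by
    refine h (d+1) w ?_ hw
    have e : ((d+1:ℕ):ℤ) - 1 = (d:ℤ) := by push_cast; ring
    rw [e, hU.sumIcc_top]
    trivial
  intro n
  induction n with
  | zero =>
    intro w hw' _
    rw [show ((0:ℕ):ℤ) - 1 = (-1:ℤ) by norm_num, sumIcc_empty _ (by omega)] at hw'
    simp only [Submodule.mem_bot] at hw'
    rw [hw']
    exact Submodule.zero_mem _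
  | succ n ih =>
    intro w hw' hTw
    rw [show ((n+1:ℕ):ℤ) - 1 = (n:ℤ) by push_cast; ring] at hw'
    rw [sumIcc_peel_top U (by positivity : (0:ℤ) ≤ (n:ℤ))] at hw'
    obtain ⟨w', hw1, x, hx, hsum⟩ := Submodule.mem_sup.mp hw'
    by_cases hcase : ((n:ℤ) = m ∨ (n:ℤ) = k)
    · have hxT : x ∈ U m ⊔ U k := by
        rcases hcase with h | h
        · exact le_sup_left (α := Submodule K V) (h ▸ hx)
        · exact le_sup_right (α := Submodule K V) (h ▸ hx)
      have hw'T : T w' - c • w' ∈ U m ⊔ U k := by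
        have e1 : T w' - c • w' = (T w - c • w) - (T x - c • x) := by
          rw [← hsum]; rw [map_add]; module
        rw [e1]
        refine sub_mem hTw (sub_mem ?_ (Submodule.smul_mem _ _ hxT))
        rw [eig _ x hx]
        exact Submodule.smul_mem _ _ hxT
      have hw'2 := ih w' hw1 hw'T
      rw [← hsum]
      exact add_mem hw'2 hxT
    · push_neg at hcase
      have hx0 : x = 0 := by
        rcases lt_or_ge (d:ℤ) (n:ℤ) with hnd | hnd
        · have : U (n:ℤ) = ⊥ := hU.bot_of_gt _ hnd
          rw [this] at hx
          simpa using hx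
        have key : (θ (n:ℤ) - c) • x ∈ U (n:ℤ) ⊓ ((U m ⊔ U k) ⊔ sumIcc U 0 ((n:ℤ)-1)) := by
          constructor
          · exact Submodule.smul_mem _ _ hx
          · have e1 : (θ (n:ℤ) - c) • x = (T w - c • w) - (T w' - c • w') := by
              rw [← hsum, map_add, eig _ x hx]
              module
            rw [e1]
            refine sub_mem (le_sup_left (α := Submodule K V) hTw) ?_
            refine le_sup_right (α := Submodule K V) ?_
            exact sub_mem (diag_pres _ _ _ hw1) (Submodule.smul_mem _ _ hw1)
        have hbot : U (n:ℤ) ⊓ ((U m ⊔ U k) ⊔ sumIcc U 0 ((n:ℤ)-1)) = ⊥ := by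
          refine hU.disjoint_block ?_
          refine sup_le (sup_le ?_ ?_) ?_
          · exact le_iSup₂ (f := fun j (_ : j ≠ (n:ℤ)) => U j) m (by omega)
          · exact le_iSup₂ (f := fun j (_ : j ≠ (n:ℤ)) => U j) k (by omega)
          · refine sumIcc_le _ fun j h1 h2 => ?_
            exact le_iSup₂ (f := fun j (_ : j ≠ (n:ℤ)) => U j) j (by omega)
        rw [hbot] at key
        simp only [Submodule.mem_bot] at key
        have hθ : θ (n:ℤ) - c ≠ 0 := by
          intro h0
          exact hcase.2 (hc _ (by positivity) hnd (sub_eq_zero.mp h0))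
        exact (smul_eq_zero.mp key).elim (fun h => absurd h hθ) id
      have hww : w = w' := by rw [← hsum, hx0, add_zero]
      rw [hww] at hTw ⊢
      exact ih w' hw1 hTw

section SplitMachinery

/-- Data of a tridiagonal pair relative to (possibly reordered) eigenspace decompositions. -/
structure TDSetup (A A' : Module.End K V) (d : ℕ) (X Y : ℤ → Submodule K V)
    (θ θ' : ℤ → K) : Prop where
  hX : IsDecomposition d X
  hY : IsDecomposition d Y
  eigX : ∀ i : ℤ, ∀ v ∈ X i, A v = θ i • v
  eigY : ∀ i : ℤ, ∀ v ∈ Y i, A' v = θ' i • v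
  tridX : ∀ i : ℤ, ∀ v ∈ X i, A' v ∈ sumIcc X (i-1) (i+1)
  tridY : ∀ i : ℤ, ∀ v ∈ Y i, A v ∈ sumIcc Y (i-1) (i+1)
  irred : ∀ W : Submodule K V, W.map A ≤ W → W.map A' ≤ W → W = ⊥ ∨ W = ⊤

/-- The split decomposition attached to the pair of decompositions `X, Y`. -/
def splitU (X Y : ℤ → Submodule K V) (d : ℕ) (i : ℤ) : Submodule K V :=
  sumIcc Y 0 i ⊓ sumIcc X i (d : ℤ)

namespace TDSetup

variable {A A' : Module.End K V} {d : ℕ} {X Y : ℤ → Submodule K V} {θ θ' : ℤ → K}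
variable (h : TDSetup A A' d X Y θ θ')
include h

lemma flipX : TDSetup A A' d (fun i => X ((d:ℤ) - i)) Y (fun i => θ ((d:ℤ) - i)) θ' where
  hX := h.hX.flip
  hY := h.hY
  eigX i v hv := h.eigX _ v hv
  eigY := h.eigY
  tridX i v hv := by
    have h1 := h.tridX ((d:ℤ) - i) v hv
    rw [sumIcc_flip]
    rw [show (d:ℤ) - (i+1) = ((d:ℤ)-i) - 1 by ring, show (d:ℤ) - (i-1) = ((d:ℤ)-i) + 1 by ring]
    exact h1
  tridY := h.tridY
  irred := h.irred

lemma flipY : TDSetup A A' d X (fun i => Y ((d:ℤ) - i)) θ (fun i => θ' ((d:ℤ) - i)) where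
  hX := h.hX
  hY := h.hY.flip
  eigX := h.eigX
  eigY i v hv := h.eigY _ v hv
  tridX := h.tridX
  tridY i v hv := by
    have h1 := h.tridY ((d:ℤ) - i) v hv
    rw [sumIcc_flip]
    rw [show (d:ℤ) - (i+1) = ((d:ℤ)-i) - 1 by ring, show (d:ℤ) - (i-1) = ((d:ℤ)-i) + 1 by ring]
    exact h1
  irred := h.irred

lemma mapA_Yflag {n : ℤ} {v : V} (hv : v ∈ sumIcc Y 0 n) : A v ∈ sumIcc Y 0 (n+1) := by
  have hle : sumIcc Y 0 n ≤ Submodule.comap A (sumIcc Y 0 (n+1)) := by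
    refine sumIcc_le _ fun j h1 h2 => fun x hx => ?_
    rw [Submodule.mem_comap]
    exact h.hY.sumIcc_le' (Or.inr le_rfl) (Or.inl (by omega)) (h.tridY j x hx)
  exact hle hv

lemma mapA'_Xflag {m : ℤ} {v : V} (hv : v ∈ sumIcc X m (d:ℤ)) :
    A' v ∈ sumIcc X (m-1) (d:ℤ) := by
  have hle : sumIcc X m (d:ℤ) ≤ Submodule.comap A' (sumIcc X (m-1) (d:ℤ)) := by
    refine sumIcc_le _ fun j h1 h2 => fun x hx => ?_
    rw [Submodule.mem_comap]
    exact h.hX.sumIcc_le' (Or.inl (by omega)) (Or.inr le_rfl) (h.tridX j x hx)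
  exact hle hv

lemma mapA_X {m n : ℤ} {v : V} (hv : v ∈ sumIcc X m n) : A v ∈ sumIcc X m n := by
  have hle : sumIcc X m n ≤ Submodule.comap A (sumIcc X m n) := by
    refine sumIcc_le _ fun j h1 h2 => fun x hx => ?_
    rw [Submodule.mem_comap, h.eigX j x hx]
    exact Submodule.smul_mem _ _ (le_sumIcc _ h1 h2 hx)
  exact hle hv

lemma mapA'_Y {m n : ℤ} {v : V} (hv : v ∈ sumIcc Y m n) : A' v ∈ sumIcc Y m n := by
  have hle : sumIcc Y m n ≤ Submodule.comap A' (sumIcc Y m n) := by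
    refine sumIcc_le _ fun j h1 h2 => fun x hx => ?_
    rw [Submodule.mem_comap, h.eigY j x hx]
    exact Submodule.smul_mem _ _ (le_sumIcc _ h1 h2 hx)
  exact hle hv

/-- Core raising: if `v ∈ (Y₀+⋯+Yₙ) ∩ (Xₚ+⋯+X_d)` then
`(A - θ p)v ∈ (Y₀+⋯+Y_{n+1}) ∩ (X_{p+1}+⋯+X_d)`. -/
lemma core_raise {n p : ℤ} {v : V} (hv : v ∈ sumIcc Y 0 n ⊓ sumIcc X p (d:ℤ)) :
    A v - θ p • v ∈ sumIcc Y 0 (n+1) ⊓ sumIcc X (p+1) (d:ℤ) := by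
  obtain ⟨hv1, hv2⟩ := hv
  constructor
  · exact sub_mem (h.mapA_Yflag hv1)
      (Submodule.smul_mem _ _ (sumIcc_mono _ le_rfl (by omega) hv1))
  · rcases le_or_gt p (d:ℤ) with hp | hp
    · rw [sumIcc_peel_bot X hp] at hv2
      obtain ⟨x, hx, y, hy, hsum⟩ := Submodule.mem_sup.mp hv2
      have e1 : A v - θ p • v = (A y - θ p • y) := by
        rw [← hsum, map_add, h.eigX p x hx]
        module
      rw [e1]
      exact sub_mem (h.mapA_X hy) (Submodule.smul_mem _ _ hy)
    · rw [sumIcc_empty _ hp] at hv2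
      have hv0 : v = 0 := by simpa using hv2
      rw [hv0, map_zero, smul_zero, sub_zero]
      exact Submodule.zero_mem _

/-- Core lowering. -/
lemma core_lower {n p : ℤ} {v : V} (hv : v ∈ sumIcc Y 0 n ⊓ sumIcc X p (d:ℤ)) :
    A' v - θ' n • v ∈ sumIcc Y 0 (n-1) ⊓ sumIcc X (p-1) (d:ℤ) := by
  obtain ⟨hv1, hv2⟩ := hv
  constructor
  · rcases le_or_gt 0 n with hn | hn
    · rw [sumIcc_peel_top Y hn] at hv1
      obtain ⟨y, hy, x, hx, hsum⟩ := Submodule.mem_sup.mp hv1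
      have e1 : A' v - θ' n • v = (A' y - θ' n • y) := by
        rw [← hsum, map_add, h.eigY n x hx]
        module
      rw [e1]
      exact sub_mem (h.mapA'_Y hy) (Submodule.smul_mem _ _ hy)
    · rw [sumIcc_empty _ (by omega)] at hv1
      have hv0 : v = 0 := by simpa using hv1
      rw [hv0, map_zero, smul_zero, sub_zero]
      exact Submodule.zero_mem _
  · exact sub_mem (h.mapA'_Xflag hv2)
      (Submodule.smul_mem _ _ (sumIcc_mono _ (by omega) le_rfl hv2))

lemma raise {i : ℤ} {v : V} (hv : v ∈ splitU X Y d i) :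
    A v - θ i • v ∈ splitU X Y d (i+1) :=
  h.core_raise hv

lemma lower {i : ℤ} {v : V} (hv : v ∈ splitU X Y d i) :
    A' v - θ' i • v ∈ splitU X Y d (i-1) :=
  h.core_lower hv

/-- The "off-diagonal" spaces vanish. -/
lemma Tbot (i : ℤ) : sumIcc Y 0 i ⊓ sumIcc X (i+1) (d:ℤ) = ⊥ := by
  set W' : Submodule K V := ⨆ j : ℤ, (sumIcc Y 0 j ⊓ sumIcc X (j+1) (d:ℤ)) with hW'
  have hT_le : ∀ j : ℤ, sumIcc Y 0 j ⊓ sumIcc X (j+1) (d:ℤ) ≤ W' :=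
    fun j => le_iSup (fun j => sumIcc Y 0 j ⊓ sumIcc X (j+1) (d:ℤ)) j
  have hA : W'.map A ≤ W' := by
    rw [Submodule.map_le_iff_le_comap, hW']
    refine iSup_le fun j => fun v hv => ?_
    rw [Submodule.mem_comap]
    have h1 : A v - θ (j+1) • v ∈ sumIcc Y 0 (j+1) ⊓ sumIcc X (j+2) (d:ℤ) := by
      have := h.core_raise (n := j) (p := j+1) hv
      rwa [show j+1+1 = j+2 by ring] at this
    have e1 : A v = θ (j+1) • v + (A v - θ (j+1) • v) := by module
    rw [e1]
    refine add_mem (hT_le j (Submodule.smul_mem _ _ hv)) ?_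
    exact hT_le (j+1) (by rwa [show j+1+1 = j+2 by ring])
  have hA' : W'.map A' ≤ W' := by
    rw [Submodule.map_le_iff_le_comap, hW']
    refine iSup_le fun j => fun v hv => ?_
    rw [Submodule.mem_comap]
    have h1 : A' v - θ' j • v ∈ sumIcc Y 0 (j-1) ⊓ sumIcc X j (d:ℤ) := by
      have := h.core_lower (n := j) (p := j+1) hv
      rwa [show j+1-1 = j by ring] at this
    have e1 : A' v = θ' j • v + (A' v - θ' j • v) := by module
    rw [e1]
    refine add_mem (hT_le j (Submodule.smul_mem _ _ hv)) ?_
    refine hT_le (j-1) ?_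
    rwa [show j-1+1 = j by ring]
  have hW'ne : W' ≠ ⊤ := by
    intro htop
    have hle : W' ≤ sumIcc X 1 (d:ℤ) := by
      rw [hW']
      refine iSup_le fun j => ?_
      rcases lt_or_ge j 0 with hj | hj
      · refine le_trans inf_le_left ?_
        rw [sumIcc_empty _ (by omega)]
        exact bot_le
      · exact le_trans inf_le_right (h.hX.sumIcc_le' (Or.inl (by omega)) (Or.inr le_rfl))
    have hX0 : X 0 ≤ sumIcc X 1 (d:ℤ) := le_trans (le_trans le_top htop.ge) hle
    have : X 0 = ⊥ := by
      have hd := h.hX.disjoint_block (i := 0) (W := sumIcc X 1 (d:ℤ))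
        (sumIcc_le _ fun j h1 h2 => le_iSup₂ (f := fun j (_ : j ≠ (0:ℤ)) => X j) j (by omega))
      rw [← hd]
      exact le_antisymm (le_inf le_rfl hX0) inf_le_left
    exact h.hX.ne_bot 0 le_rfl (by positivity) this
  rcases h.irred W' hA hA' with hbot | htop
  · exact le_bot_iff.mp (hbot ▸ hT_le i)
  · exact absurd htop hW'ne

lemma span : sumIcc (splitU X Y d) 0 (d:ℤ) = ⊤ := by
  set W : Submodule K V := ⨆ j : ℤ, splitU X Y d j with hW
  have hU_le : ∀ j : ℤ, splitU X Y d j ≤ W := fun j => le_iSup (splitU X Y d) j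
  have hA : W.map A ≤ W := by
    rw [Submodule.map_le_iff_le_comap, hW]
    refine iSup_le fun j => fun v hv => ?_
    rw [Submodule.mem_comap]
    have e1 : A v = θ j • v + (A v - θ j • v) := by module
    rw [e1]
    exact add_mem (hU_le j (Submodule.smul_mem _ _ hv)) (hU_le (j+1) (h.raise hv))
  have hA' : W.map A' ≤ W := by
    rw [Submodule.map_le_iff_le_comap, hW]
    refine iSup_le fun j => fun v hv => ?_
    rw [Submodule.mem_comap]
    have e1 : A' v = θ' j • v + (A' v - θ' j • v) := by module
    rw [e1]
    exact add_mem (hU_le j (Submodule.smul_mem _ _ hv)) (hU_le (j-1) (h.lower hv))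
  have hY0 : Y 0 = splitU X Y d 0 := by
    rw [splitU, sumIcc_self, h.hX.sumIcc_top, inf_top_eq]
  rcases h.irred W hA hA' with hbot | htop
  · exfalso
    refine h.hY.ne_bot 0 le_rfl (by positivity) ?_
    rw [hY0]
    exact le_bot_iff.mp (hbot ▸ hU_le 0)
  · apply le_antisymm le_top
    rw [← htop, hW]
    refine iSup_le fun j => ?_
    rcases lt_or_ge j 0 with hj | hj
    · refine le_trans inf_le_left ?_
      rw [sumIcc_empty _ (by omega)]
      exact bot_le
    rcases le_or_gt j (d:ℤ) with hj2 | hj2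
    · exact le_sumIcc _ hj hj2
    · refine le_trans inf_le_right ?_
      rw [sumIcc_empty _ (by omega)]
      exact bot_le

lemma splitU_bot {i : ℤ} (hi : i < 0 ∨ (d:ℤ) < i) : splitU X Y d i = ⊥ := by
  rcases hi with hi | hi
  · refine le_bot_iff.mp (le_trans inf_le_left ?_)
    rw [sumIcc_empty _ (by omega)]
  · refine le_bot_iff.mp (le_trans inf_le_right ?_)
    rw [sumIcc_empty _ (by omega)]

lemma flagY (n : ℤ) : sumIcc Y 0 n = sumIcc (splitU X Y d) 0 n := by
  have hge : sumIcc (splitU X Y d) 0 n ≤ sumIcc Y 0 n :=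
    sumIcc_le _ fun j h1 h2 => le_trans inf_le_left (sumIcc_mono _ le_rfl h2)
  refine le_antisymm ?_ hge
  rcases lt_or_ge n 0 with hn | hn
  · rw [sumIcc_empty _ (by omega)]
    exact bot_le
  rcases le_or_gt (d:ℤ) n with hn2 | hn2
  · have h1 : sumIcc (splitU X Y d) 0 (d:ℤ) ≤ sumIcc (splitU X Y d) 0 n :=
      sumIcc_mono _ le_rfl hn2
    rw [h.span] at h1
    exact le_trans le_top h1
  · intro v hv
    have hv2 : v ∈ sumIcc (splitU X Y d) 0 n ⊔ sumIcc (splitU X Y d) (n+1) (d:ℤ) := by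
      rw [← sumIcc_split _ hn (by omega), h.span]
      trivial
    obtain ⟨p, hp, r, hr, hsum⟩ := Submodule.mem_sup.mp hv2
    have hr2 : r ∈ sumIcc Y 0 n ⊓ sumIcc X (n+1) (d:ℤ) := by
      constructor
      · have : r = v - p := by rw [← hsum]; abel
        rw [this]
        exact sub_mem hv (hge hp)
      · refine (sumIcc_le _ fun j h1 h2 => le_trans inf_le_right (sumIcc_mono _ h1 le_rfl)) hr
    rw [h.Tbot n] at hr2
    simp only [Submodule.mem_bot] at hr2
    rw [← hsum, hr2, add_zero]
    exact hp

lemma flagX (m : ℤ) : sumIcc X m (d:ℤ) = sumIcc (splitU X Y d) m (d:ℤ) := by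
  have hge : sumIcc (splitU X Y d) m (d:ℤ) ≤ sumIcc X m (d:ℤ) :=
    sumIcc_le _ fun j h1 h2 => le_trans inf_le_right (sumIcc_mono _ h1 le_rfl)
  refine le_antisymm ?_ hge
  rcases le_or_gt m 0 with hm | hm
  · have h1 : sumIcc (splitU X Y d) 0 (d:ℤ) ≤ sumIcc (splitU X Y d) m (d:ℤ) :=
      sumIcc_mono _ hm le_rfl
    rw [h.span] at h1
    exact le_trans le_top h1
  rcases lt_or_ge (d:ℤ) m with hm2 | hm2
  · rw [sumIcc_empty _ (by omega)]
    exact bot_le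
  · intro v hv
    have hv2 : v ∈ sumIcc (splitU X Y d) 0 (m-1) ⊔ sumIcc (splitU X Y d) m (d:ℤ) := by
      have hsplit := sumIcc_split (splitU X Y d) (by omega : (0:ℤ) ≤ m-1) (by omega : m-1 ≤ (d:ℤ))
      rw [show m-1+1 = m by ring] at hsplit
      rw [← hsplit, h.span]
      trivial
    obtain ⟨p, hp, r, hr, hsum⟩ := Submodule.mem_sup.mp hv2
    have hp2 : p ∈ sumIcc Y 0 (m-1) ⊓ sumIcc X m (d:ℤ) := by
      constructor
      · exact (sumIcc_le _ fun j h1 h2 => le_trans inf_le_left (sumIcc_mono _ le_rfl h2)) hp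
      · have : p = v - r := by rw [← hsum]; abel
        rw [this]
        exact sub_mem hv (hge hr)
    have := h.Tbot (m-1)
    rw [show m-1+1 = m by ring] at this
    rw [this] at hp2
    simp only [Submodule.mem_bot] at hp2
    rw [← hsum, hp2, zero_add]
    exact hr

lemma interval (m n : ℤ) :
    sumIcc Y 0 n ⊓ sumIcc X m (d:ℤ) = sumIcc (splitU X Y d) m n := by
  have hge : sumIcc (splitU X Y d) m n ≤ sumIcc Y 0 n ⊓ sumIcc X m (d:ℤ) := by
    refine sumIcc_le _ fun j h1 h2 => le_inf ?_ ?_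
    · exact le_trans inf_le_left (sumIcc_mono _ le_rfl h2)
    · exact le_trans inf_le_right (sumIcc_mono _ h1 le_rfl)
  refine le_antisymm ?_ hge
  rcases lt_or_ge n m with hnm | hnm
  · have h1 : sumIcc Y 0 n ⊓ sumIcc X m (d:ℤ) ≤ sumIcc Y 0 n ⊓ sumIcc X (n+1) (d:ℤ) :=
      inf_le_inf_left _ (sumIcc_mono _ (by omega) le_rfl)
    rw [h.Tbot n] at h1
    intro v hv
    have := h1 hv
    simp only [Submodule.mem_bot] at this
    rw [this]
    exact Submodule.zero_mem _
  · intro v hv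
    obtain ⟨hv1, hv2⟩ := hv
    rw [h.flagX m] at hv2
    rcases le_or_gt (d:ℤ) n with hn | hn
    · exact sumIcc_mono _ le_rfl hn hv2
    have hv3 : v ∈ sumIcc (splitU X Y d) m n ⊔ sumIcc (splitU X Y d) (n+1) (d:ℤ) := by
      rw [← sumIcc_split _ hnm (by omega)]
      exact hv2
    obtain ⟨p, hp, r, hr, hsum⟩ := Submodule.mem_sup.mp hv3
    have hr2 : r ∈ sumIcc Y 0 n ⊓ sumIcc X (n+1) (d:ℤ) := by
      constructor
      · have : r = v - p := by rw [← hsum]; abel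
        rw [this]
        refine sub_mem hv1 ?_
        exact (sumIcc_le _ fun j h1 h2 => le_trans inf_le_left (sumIcc_mono _ le_rfl h2)) hp
      · refine (sumIcc_le _ fun j h1 h2 => le_trans inf_le_right (sumIcc_mono _ h1 le_rfl)) hr
    rw [h.Tbot n] at hr2
    simp only [Submodule.mem_bot] at hr2
    rw [← hsum, hr2, add_zero]
    exact hp

end TDSetup
end SplitMachinery

section EvalTools
variable {q : K} {d : ℕ}

lemma diag_sumIcc {P : Module.End K V} {U : ℤ → Submodule K V} {ξ : ℤ → K}
    (hdiag : ∀ j : ℤ, ∀ v ∈ U j, P v = ξ j • v) {m n : ℤ} {v : V}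
    (hv : v ∈ sumIcc U m n) : P v ∈ sumIcc U m n := by
  have hle : sumIcc U m n ≤ Submodule.comap P (sumIcc U m n) := by
    refine sumIcc_le _ fun j h1 h2 => fun x hx => ?_
    rw [Submodule.mem_comap, hdiag j x hx]
    exact Submodule.smul_mem _ _ (le_sumIcc _ h1 h2 hx)
  exact hle hv

/-- Two endomorphisms agree if the pointwise relation holds on a spanning family of blocks. -/
lemma rel_eval {U : ℤ → Submodule K V} (hspan : sumIcc U 0 (d:ℤ) = ⊤)
    {F G : Module.End K V}
    (hpt : ∀ i : ℤ, 0 ≤ i → i ≤ (d:ℤ) → ∀ v ∈ U i, F v = G v) : F = G := by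
  have hle : sumIcc U 0 (d:ℤ) ≤ LinearMap.eqLocus F G :=
    sumIcc_le _ fun j h1 h2 => fun v hv => hpt j h1 h2 v hv
  refine LinearMap.ext fun v => ?_
  have hv : v ∈ sumIcc U 0 (d:ℤ) := by rw [hspan]; trivial
  exact hle hv

lemma scale_rel (hqq : q - q⁻¹ ≠ 0) {P Q : Module.End K V}
    (h : q • (P*Q) - q⁻¹ • (Q*P) = (q - q⁻¹) • (1 : Module.End K V)) :
    (q - q⁻¹)⁻¹ • (q • (P*Q) - q⁻¹ • (Q*P)) = 1 := by
  rw [h, smul_smul, inv_mul_cancel₀ hqq, one_smul]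

/-- Block computation: `P` diagonal, `Q` moves by one step. -/
lemma block_step {P Q : Module.End K V} {U : ℤ → Submodule K V} {ξ : ℤ → K}
    {i k : ℤ} {ηi : K}
    (hdiag : ∀ j : ℤ, ∀ w ∈ U j, P w = ξ j • w)
    {v : V} (hv : v ∈ U i) (hQ : Q v - ηi • v ∈ U k)
    (hc1 : q * (ξ i * ηi) - q⁻¹ * (ξ i * ηi) = q - q⁻¹)
    (hc2 : q * ξ k - q⁻¹ * ξ i = 0) :
    q • P (Q v) - q⁻¹ • Q (P v) = (q - q⁻¹) • v := by
  obtain ⟨w, hw⟩ : ∃ w, Q v - ηi • v = w := ⟨_, rfl⟩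
  rw [hw] at hQ
  have hQv : Q v = ηi • v + w := by rw [← hw]; abel
  have h1 : P (Q v) = ηi • (ξ i • v) + ξ k • w := by
    rw [hQv, map_add, map_smul, hdiag i v hv, hdiag k w hQ]
  have h2 : Q (P v) = ξ i • (ηi • v + w) := by rw [hdiag i v hv, map_smul, hQv]
  rw [h1, h2]
  match_scalars
  · linear_combination hc1
  · linear_combination hc2

/-- Mirrored block computation. -/
lemma block_step' {P Q : Module.End K V} {U : ℤ → Submodule K V} {ξ : ℤ → K}
    {i k : ℤ} {ηi : K}
    (hdiag : ∀ j : ℤ, ∀ w ∈ U j, P w = ξ j • w)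
    {v : V} (hv : v ∈ U i) (hQ : Q v - ηi • v ∈ U k)
    (hc1 : q * (ξ i * ηi) - q⁻¹ * (ξ i * ηi) = q - q⁻¹)
    (hc2 : q * ξ i - q⁻¹ * ξ k = 0) :
    q • Q (P v) - q⁻¹ • P (Q v) = (q - q⁻¹) • v := by
  obtain ⟨w, hw⟩ : ∃ w, Q v - ηi • v = w := ⟨_, rfl⟩
  rw [hw] at hQ
  have hQv : Q v = ηi • v + w := by rw [← hw]; abel
  have h1 : P (Q v) = ηi • (ξ i • v) + ξ k • w := by
    rw [hQv, map_add, map_smul, hdiag i v hv, hdiag k w hQ]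
  have h2 : Q (P v) = ξ i • (ηi • v + w) := by rw [hdiag i v hv, map_smul, hQv]
  rw [h1, h2]
  match_scalars
  · linear_combination hc1
  · linear_combination hc2

/-- Cubic `q`-Serre relation from a diagonal operator and a tridiagonal one. -/
lemma serre_eval {X Y : Module.End K V} {U : ℤ → Submodule K V} {ξ : ℤ → K}
    (hspan : sumIcc U 0 (d:ℤ) = ⊤)
    (hdiag : ∀ j : ℤ, ∀ w ∈ U j, X w = ξ j • w)
    (htrid : ∀ i : ℤ, 0 ≤ i → i ≤ (d:ℤ) → ∀ v ∈ U i, Y v ∈ sumIcc U (i-1) (i+1))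
    (hup : ∀ i : ℤ, ξ (i+1)^3 - qInt q 3 * (ξ i * ξ (i+1)^2)
      + qInt q 3 * (ξ i^2 * ξ (i+1)) - ξ i^3 = 0)
    (hdn : ∀ i : ℤ, ξ (i-1)^3 - qInt q 3 * (ξ i * ξ (i-1)^2)
      + qInt q 3 * (ξ i^2 * ξ (i-1)) - ξ i^3 = 0) :
    X^3*Y - qInt q 3 • (X^2*Y*X) + qInt q 3 • (X*Y*X^2) - Y*X^3 = 0 := by
  refine rel_eval (d := d) hspan (fun i h0 hd v hv => ?_)
  have hYv := htrid i h0 hd v hv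
  have hdec : sumIcc U (i-1) (i+1) = U (i-1) ⊔ U i ⊔ U (i+1) := by
    rw [sumIcc_split U (by omega : i-1 ≤ i) (by omega : i ≤ i+1),
      sumIcc_peel_bot U (by omega : i-1 ≤ i), show i-1+1 = i by ring,
      sumIcc_self, sumIcc_self]
  rw [hdec] at hYv
  obtain ⟨y, hy, w₃, hw₃, hsum⟩ := Submodule.mem_sup.mp hYv
  obtain ⟨w₁, hw₁, w₂, hw₂, hsum2⟩ := Submodule.mem_sup.mp hy
  have hYv' : Y v = w₁ + w₂ + w₃ := by rw [← hsum, ← hsum2]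
  have hXv : X v = ξ i • v := hdiag i v hv
  have h1 : X (Y v) = ξ (i-1) • w₁ + ξ i • w₂ + ξ (i+1) • w₃ := by
    rw [hYv', map_add, map_add, hdiag _ _ hw₁, hdiag _ _ hw₂, hdiag _ _ hw₃]
  have h2 : X (X (Y v)) = (ξ (i-1) * ξ (i-1)) • w₁ + (ξ i * ξ i) • w₂
      + (ξ (i+1) * ξ (i+1)) • w₃ := by
    rw [h1, map_add, map_add, map_smul, map_smul, map_smul,
      hdiag _ _ hw₁, hdiag _ _ hw₂, hdiag _ _ hw₃, smul_smul, smul_smul, smul_smul]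
  have h3 : X (X (X (Y v))) = (ξ (i-1) * ξ (i-1) * ξ (i-1)) • w₁
      + (ξ i * ξ i * ξ i) • w₂ + (ξ (i+1) * ξ (i+1) * ξ (i+1)) • w₃ := by
    rw [h2, map_add, map_add, map_smul, map_smul, map_smul,
      hdiag _ _ hw₁, hdiag _ _ hw₂, hdiag _ _ hw₃, smul_smul, smul_smul, smul_smul]
  have e0 : ∀ u : V, (X^3*Y - qInt q 3 • (X^2*Y*X) + qInt q 3 • (X*Y*X^2) - Y*X^3) u
      = X (X (X (Y u))) - qInt q 3 • (X (X (Y (X u)))) + qInt q 3 • (X (Y (X (X u))))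
        - Y (X (X (X u))) := by
    intro u
    simp only [LinearMap.sub_apply, LinearMap.add_apply, LinearMap.smul_apply,
      Module.End.mul_apply, pow_succ, pow_zero, one_mul, Module.End.one_apply]
  have k1 : X (X v) = (ξ i * ξ i) • v := by rw [hXv, map_smul, hXv, smul_smul]
  have k2 : X (X (X v)) = (ξ i * ξ i * ξ i) • v := by rw [k1, map_smul, hXv, smul_smul]
  have t2 : X (X (Y (X v))) = ξ i • (X (X (Y v))) := by
    rw [hXv, map_smul, map_smul, map_smul]
  have t3 : X (Y (X (X v))) = (ξ i * ξ i) • (X (Y v)) := by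
    rw [k1, map_smul, map_smul]
  have t4 : Y (X (X (X v))) = (ξ i * ξ i * ξ i) • (Y v) := by rw [k2, map_smul]
  rw [e0, LinearMap.zero_apply, t2, t3, t4, h3, h2, h1, hYv']
  match_scalars
  · linear_combination hdn i
  · ring
  · linear_combination hup i


lemma rel_eval_raw {U : ℤ → Submodule K V} (hspan : sumIcc U 0 (d:ℤ) = ⊤)
    {P Q : Module.End K V}
    (hpt : ∀ i : ℤ, 0 ≤ i → i ≤ (d:ℤ) → ∀ v ∈ U i,
      q • P (Q v) - q⁻¹ • Q (P v) = (q - q⁻¹) • v) :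
    q • (P*Q) - q⁻¹ • (Q*P) = (q - q⁻¹) • (1 : Module.End K V) := by
  refine rel_eval hspan (fun i h0 hd v hv => ?_)
  simp only [LinearMap.sub_apply, LinearMap.smul_apply, Module.End.mul_apply,
    Module.End.one_apply]
  exact hpt i h0 hd v hv

lemma move_flag_up {P : Module.End K V} {W : ℤ → Submodule K V}
    (hW : IsDecomposition d W)
    (hmv : ∀ j : ℤ, 0 ≤ j → j ≤ (d:ℤ) → ∀ x ∈ W j, P x ∈ W j ⊔ W (j+1))
    (m : ℤ) : ∀ v ∈ sumIcc W 0 m, P v ∈ sumIcc W 0 (m+1) := by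
  intro v hv
  refine (sumIcc_le _ (fun j h1 h2 => fun x hx => ?_) :
    sumIcc W 0 m ≤ Submodule.comap P (sumIcc W 0 (m+1))) hv
  rw [Submodule.mem_comap]
  rcases le_or_gt j (d:ℤ) with hj | hj
  · exact (sup_le (α := Submodule K V) (le_sumIcc _ h1 (by omega)) (le_sumIcc _ (by omega) (by omega)))
      (hmv j h1 hj x hx)
  · have hb := hW.bot_of_gt j hj
    rw [hb] at hx
    have hx0 : x = 0 := by simpa using hx
    rw [hx0, map_zero]
    exact Submodule.zero_mem _

lemma move_flag_down {P : Module.End K V} {W : ℤ → Submodule K V}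
    (hW : IsDecomposition d W)
    (hmv : ∀ j : ℤ, 0 ≤ j → j ≤ (d:ℤ) → ∀ x ∈ W j, P x ∈ W j ⊔ W (j-1))
    (m : ℤ) : ∀ v ∈ sumIcc W m (d:ℤ), P v ∈ sumIcc W (m-1) (d:ℤ) := by
  intro v hv
  refine (sumIcc_le _ (fun j h1 h2 => fun x hx => ?_) :
    sumIcc W m (d:ℤ) ≤ Submodule.comap P (sumIcc W (m-1) (d:ℤ))) hv
  rw [Submodule.mem_comap]
  rcases le_or_gt 0 j with hj | hj
  · exact (sup_le (α := Submodule K V) (le_sumIcc _ (by omega) h2) (le_sumIcc _ (by omega) (by omega)))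
      (hmv j hj h2 x hx)
  · have hb := hW.bot_of_lt j hj
    rw [hb] at hx
    have hx0 : x = 0 := by simpa using hx
    rw [hx0, map_zero]
    exact Submodule.zero_mem _


lemma rel_apply {P Q : Module.End K V}
    (h : q • (P*Q) - q⁻¹ • (Q*P) = (q - q⁻¹) • (1 : Module.End K V)) (x : V) :
    q • P (Q x) - q⁻¹ • Q (P x) = (q - q⁻¹) • x := by
  have h1 := LinearMap.congr_fun h x
  simpa only [LinearMap.sub_apply, LinearMap.smul_apply, Module.End.mul_apply,
    Module.End.one_apply] using h1

lemma solve_I (hq0 : q ≠ 0) {P T : Module.End K V} {x : V} {ζ : K}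
    (hrel : q • (ζ • P x) - q⁻¹ • T (P x) = (q - q⁻¹) • x) :
    T (P x) - (q * q * ζ) • P x = -((q * (q - q⁻¹)) • x) := by
  have h6 : q⁻¹ • T (P x) = q • (ζ • P x) - (q - q⁻¹) • x := by rw [← hrel]; abel
  have h7 : T (P x) = q • (q • (ζ • P x) - (q - q⁻¹) • x) := by
    rw [← h6, smul_smul, mul_inv_cancel₀ hq0, one_smul]
  rw [h7]
  module

lemma solve_II (hq0 : q ≠ 0) {P T : Module.End K V} {x : V} {ζ : K}
    (hrel : q • T (P x) - q⁻¹ • (ζ • P x) = (q - q⁻¹) • x) :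
    T (P x) - (q⁻¹ * q⁻¹ * ζ) • P x = (q⁻¹ * (q - q⁻¹)) • x := by
  have h6 : q • T (P x) = (q - q⁻¹) • x + q⁻¹ • (ζ • P x) := by rw [← hrel]; abel
  have h7 : T (P x) = q⁻¹ • ((q - q⁻¹) • x + q⁻¹ • (ζ • P x)) := by
    rw [← h6, smul_smul, inv_mul_cancel₀ hq0, one_smul]
  rw [h7]
  module

lemma mem_splitU {X Y : ℤ → Submodule K V} {d : ℕ} {i : ℤ} {v : V} :
    v ∈ splitU X Y d i ↔ v ∈ sumIcc Y 0 i ∧ v ∈ sumIcc X i (d:ℤ) := Iff.rfl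


lemma qInt_three (hq0 : q ≠ 0) (hqq : q - q⁻¹ ≠ 0) :
    qInt q 3 = q*q + 1 + q⁻¹*q⁻¹ := by
  have e3 : q ^ (3:ℤ) = q*q*q := by
    rw [show (3:ℤ) = 1+(1+1) by norm_num, zpow_add₀ hq0, zpow_add₀ hq0, zpow_one]
    ring
  have e3' : q ^ (-3:ℤ) = q⁻¹*(q⁻¹*q⁻¹) := by
    rw [show (-3:ℤ) = (-1)+((-1)+(-1)) by norm_num, zpow_add₀ hq0, zpow_add₀ hq0,
      zpow_neg_one]
  rw [qInt, show -(3:ℤ) = (-3:ℤ) by norm_num, e3, e3', div_eq_iff hqq]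
  field_simp
  ring

lemma serre_coef (hq0 : q ≠ 0) (hqq : q - q⁻¹ ≠ 0) (s t : K) (hs : s ≠ 0)
    (hst : t = (q*q)*s ∨ t = q⁻¹*q⁻¹*s) :
    t^3 - qInt q 3 * (s * t^2) + qInt q 3 * (s^2 * t) - s^3 = 0 := by
  rw [qInt_three hq0 hqq]
  rcases hst with h | h
  · rw [h]
    field_simp
    ring
  · have h' : s = (q*q)*t := by
      rw [h]
      field_simp
    rw [h']
    field_simp
    ring

end EvalTools

set_option maxHeartbeats 2000000

/-- the assignment `y₀⁺ = b*⁻¹B*, y₁⁺ = b⁻¹B, y₀⁻ = a*⁻¹A*, y₁⁻ = a⁻¹A,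
k₀ = K, k₁ = K⁻¹` satisfies the alternate relations and is irreducible. -/
theorem stmt13 {K : Type*} [Field K] [IsAlgClosed K]
    {V : Type*} [AddCommGroup V] [Module K V] [FiniteDimensional K V] [Nontrivial V]
    (q : K) (hq0 : q ≠ 0) (hq : ∀ n : ℕ, 0 < n → q ^ n ≠ 1)
    (A A' : Module.End K V) (d : ℕ) (Vs Vs' : ℤ → Submodule K V) (θ θ' : ℤ → K)
    (hTD : IsTridiagonalPair A A' d Vs Vs' θ θ')
    (a a' : K) (ha : a ≠ 0) (ha' : a' ≠ 0)
    (hθ : ∀ i : ℤ, 0 ≤ i → i ≤ (d : ℤ) → θ i = a * q ^ (2 * i - (d : ℤ)))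
    (hθ' : ∀ i : ℤ, 0 ≤ i → i ≤ (d : ℤ) → θ' i = a' * q ^ ((d : ℤ) - 2 * i))
    (b b' : K) (hb : b ≠ 0) (hb' : b' ≠ 0)
    (B : Module.End K V)
    (hB : ∀ i : ℤ, 0 ≤ i → i ≤ (d : ℤ) → ∀ v ∈ dec0s0 d Vs Vs' i,
      B v = (b * q ^ (2 * i - (d : ℤ))) • v)
    (B' : Module.End K V)
    (hB' : ∀ i : ℤ, 0 ≤ i → i ≤ (d : ℤ) → ∀ v ∈ decDsD d Vs Vs' i,
      B' v = (b' * q ^ ((d : ℤ) - 2 * i)) • v)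
    (Kop : Module.End K V)
    (hKop : ∀ i : ℤ, 0 ≤ i → i ≤ (d : ℤ) → ∀ v ∈ dec0sD d Vs Vs' i,
      Kop v = (q ^ (2 * i - (d : ℤ))) • v)
    (Kinv : Module.End K V)
    (hKinv1 : Kop * Kinv = 1) (hKinv2 : Kinv * Kop = 1)
    :
    AlternateRelations q ![b'⁻¹ • B', b⁻¹ • B] ![a'⁻¹ • A', a⁻¹ • A] ![Kop, Kinv] ![Kinv, Kop] ∧
    (∀ W : Submodule K V,
      Submodule.map (b'⁻¹ • B') W ≤ W → Submodule.map (b⁻¹ • B) W ≤ W →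
      Submodule.map (a'⁻¹ • A') W ≤ W → Submodule.map (a⁻¹ • A) W ≤ W →
      Submodule.map Kop W ≤ W → Submodule.map Kinv W ≤ W →
      W = ⊥ ∨ W = ⊤) := by
  have hqq : q - q⁻¹ ≠ 0 := qsub_ne hq0 hq
  have hinj : ∀ m n : ℤ, q ^ m = q ^ n → m = n := fun m n h => qzpow_inj hq0 hq h
  have hone : ∀ e f : ℤ, e + f = 0 → q ^ e * q ^ f = 1 := fun e f hef => by
    rw [← zpow_add₀ hq0, hef, zpow_zero]
  have hstep : ∀ e : ℤ, q * q ^ (e - 2) - q⁻¹ * q ^ e = 0 := by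
    intro e
    have h1 : q * q ^ (e-2) = q ^ (e-1) := by
      rw [show e - 1 = 1 + (e-2) by ring, zpow_add₀ hq0, zpow_one]
    have h2 : q⁻¹ * q ^ e = q ^ (e-1) := by
      rw [show e - 1 = (-1) + e by ring, zpow_add₀ hq0, zpow_neg_one]
    rw [h1, h2, sub_self]
  -- the three tridiagonal setups
  have S1 : TDSetup A A' d Vs Vs' θ θ' :=
    { hX := hTD.decompV, hY := hTD.decompV', eigX := hTD.eig, eigY := hTD.eig',
      tridX := fun i v hv => by
        have h1 := hTD.trid i (Submodule.mem_map_of_mem hv)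
        exact (sup_le (α := Submodule K V) (sup_le (le_sumIcc _ le_rfl (by omega))
          (le_sumIcc _ (by omega) (by omega))) (le_sumIcc _ (by omega) le_rfl)) h1,
      tridY := fun i v hv => by
        have h1 := hTD.trid' i (Submodule.mem_map_of_mem hv)
        exact (sup_le (α := Submodule K V) (sup_le (le_sumIcc _ le_rfl (by omega))
          (le_sumIcc _ (by omega) (by omega))) (le_sumIcc _ (by omega) le_rfl)) h1,
      irred := hTD.irred }
  have S2 := S1.flipX
  have S3 := S1.flipY
  -- identification of the decompositions in the hypotheses with split decompositions
  have hU2eq : ∀ i : ℤ, splitU (fun j => Vs ((d:ℤ) - j)) Vs' d i = dec0s0 d Vs Vs' i := by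
    intro i
    show sumIcc Vs' 0 i ⊓ sumIcc (fun j => Vs ((d:ℤ) - j)) i (d:ℤ) = _
    rw [sumIcc_flip, sub_self]
    rfl
  have hU3eq : ∀ i : ℤ, splitU Vs (fun j => Vs' ((d:ℤ) - j)) d i = decDsD d Vs Vs' i := by
    intro i
    show sumIcc (fun j => Vs' ((d:ℤ) - j)) 0 i ⊓ sumIcc Vs i (d:ℤ) = _
    rw [sumIcc_flip, sub_zero]
    rfl
  -- diagonal actions (extended to all integers)
  have dKop : ∀ i : ℤ, ∀ v ∈ splitU Vs Vs' d i, Kop v = (q ^ (2*i - (d:ℤ))) • v := by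
    intro i v hv
    rcases lt_or_ge i 0 with hi | hi
    · rw [S1.splitU_bot (Or.inl hi)] at hv
      have hv0 : v = 0 := by simpa using hv
      rw [hv0, map_zero, smul_zero]
    rcases le_or_gt i (d:ℤ) with hi2 | hi2
    · exact hKop i hi hi2 v hv
    · rw [S1.splitU_bot (Or.inr hi2)] at hv
      have hv0 : v = 0 := by simpa using hv
      rw [hv0, map_zero, smul_zero]
  have dKinv : ∀ i : ℤ, ∀ v ∈ splitU Vs Vs' d i, Kinv v = (q ^ ((d:ℤ) - 2*i)) • v := by
    intro i v hv
    have h1 : Kinv (Kop v) = v := by rw [← Module.End.mul_apply, hKinv2, Module.End.one_apply]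
    rw [dKop i v hv, map_smul] at h1
    have hne : q ^ (2*i - (d:ℤ)) ≠ 0 := zpow_ne_zero _ hq0
    calc Kinv v = (q ^ (2*i-(d:ℤ)))⁻¹ • (q ^ (2*i-(d:ℤ)) • Kinv v) := (inv_smul_smul₀ hne _).symm
    _ = (q ^ (2*i-(d:ℤ)))⁻¹ • v := by rw [h1]
    _ = q ^ ((d:ℤ) - 2*i) • v := by
        rw [← zpow_neg, show -(2*i-(d:ℤ)) = (d:ℤ)-2*i by ring]
  have dBp : ∀ i : ℤ, ∀ v ∈ splitU (fun j => Vs ((d:ℤ) - j)) Vs' d i,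
      (b⁻¹ • B) v = (q ^ (2*i - (d:ℤ))) • v := by
    intro i v hv
    rcases lt_or_ge i 0 with hi | hi
    · rw [S2.splitU_bot (Or.inl hi)] at hv
      have hv0 : v = 0 := by simpa using hv
      rw [hv0, map_zero, smul_zero]
    rcases le_or_gt i (d:ℤ) with hi2 | hi2
    · rw [LinearMap.smul_apply, hB i hi hi2 v (by rw [← hU2eq i]; exact hv), smul_smul,
        show b⁻¹ * (b * q ^ (2*i - (d:ℤ))) = q ^ (2*i - (d:ℤ)) by field_simp]
    · rw [S2.splitU_bot (Or.inr hi2)] at hv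
      have hv0 : v = 0 := by simpa using hv
      rw [hv0, map_zero, smul_zero]
  have dBp' : ∀ i : ℤ, ∀ v ∈ splitU Vs (fun j => Vs' ((d:ℤ) - j)) d i,
      (b'⁻¹ • B') v = (q ^ ((d:ℤ) - 2*i)) • v := by
    intro i v hv
    rcases lt_or_ge i 0 with hi | hi
    · rw [S3.splitU_bot (Or.inl hi)] at hv
      have hv0 : v = 0 := by simpa using hv
      rw [hv0, map_zero, smul_zero]
    rcases le_or_gt i (d:ℤ) with hi2 | hi2
    · rw [LinearMap.smul_apply, hB' i hi hi2 v (by rw [← hU3eq i]; exact hv), smul_smul,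
        show b'⁻¹ * (b' * q ^ ((d:ℤ) - 2*i)) = q ^ ((d:ℤ) - 2*i) by field_simp]
    · rw [S3.splitU_bot (Or.inr hi2)] at hv
      have hv0 : v = 0 := by simpa using hv
      rw [hv0, map_zero, smul_zero]
  have dAm : ∀ i : ℤ, ∀ v ∈ Vs i, (a⁻¹ • A) v = (q ^ (2*i - (d:ℤ))) • v := by
    intro i v hv
    rcases lt_or_ge i 0 with hi | hi
    · rw [hTD.decompV.bot_of_lt i hi] at hv
      have hv0 : v = 0 := by simpa using hv
      rw [hv0, map_zero, smul_zero]
    rcases le_or_gt i (d:ℤ) with hi2 | hi2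
    · rw [LinearMap.smul_apply, hTD.eig i v hv, hθ i hi hi2, smul_smul,
        show a⁻¹ * (a * q ^ (2*i - (d:ℤ))) = q ^ (2*i - (d:ℤ)) by field_simp]
    · rw [hTD.decompV.bot_of_gt i hi2] at hv
      have hv0 : v = 0 := by simpa using hv
      rw [hv0, map_zero, smul_zero]
  have dAm' : ∀ i : ℤ, ∀ v ∈ Vs' i, (a'⁻¹ • A') v = (q ^ ((d:ℤ) - 2*i)) • v := by
    intro i v hv
    rcases lt_or_ge i 0 with hi | hi
    · rw [hTD.decompV'.bot_of_lt i hi] at hv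
      have hv0 : v = 0 := by simpa using hv
      rw [hv0, map_zero, smul_zero]
    rcases le_or_gt i (d:ℤ) with hi2 | hi2
    · rw [LinearMap.smul_apply, hTD.eig' i v hv, hθ' i hi hi2, smul_smul,
        show a'⁻¹ * (a' * q ^ ((d:ℤ) - 2*i)) = q ^ ((d:ℤ) - 2*i) by field_simp]
    · rw [hTD.decompV'.bot_of_gt i hi2] at hv
      have hv0 : v = 0 := by simpa using hv
      rw [hv0, map_zero, smul_zero]
  -- one-step movers on the split decompositions (scaled operators)
  have mAmU1 : ∀ i : ℤ, 0 ≤ i → i ≤ (d:ℤ) → ∀ v ∈ splitU Vs Vs' d i,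
      (a⁻¹ • A) v - q ^ (2*i - (d:ℤ)) • v ∈ splitU Vs Vs' d (i+1) := by
    intro i h0 hd v hv
    have e1 : (a⁻¹ • A) v - q ^ (2*i - (d:ℤ)) • v = a⁻¹ • (A v - θ i • v) := by
      rw [smul_sub, smul_smul, LinearMap.smul_apply, hθ i h0 hd,
        show a⁻¹ * (a * q ^ (2*i - (d:ℤ))) = q ^ (2*i - (d:ℤ)) by field_simp]
    rw [e1]
    exact Submodule.smul_mem _ _ (S1.raise hv)
  have mAm'U1 : ∀ i : ℤ, 0 ≤ i → i ≤ (d:ℤ) → ∀ v ∈ splitU Vs Vs' d i,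
      (a'⁻¹ • A') v - q ^ ((d:ℤ) - 2*i) • v ∈ splitU Vs Vs' d (i-1) := by
    intro i h0 hd v hv
    have e1 : (a'⁻¹ • A') v - q ^ ((d:ℤ) - 2*i) • v = a'⁻¹ • (A' v - θ' i • v) := by
      rw [smul_sub, smul_smul, LinearMap.smul_apply, hθ' i h0 hd,
        show a'⁻¹ * (a' * q ^ ((d:ℤ) - 2*i)) = q ^ ((d:ℤ) - 2*i) by field_simp]
    rw [e1]
    exact Submodule.smul_mem _ _ (S1.lower hv)
  have mAmU2 : ∀ i : ℤ, 0 ≤ i → i ≤ (d:ℤ) → ∀ v ∈ splitU (fun j => Vs ((d:ℤ) - j)) Vs' d i,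
      (a⁻¹ • A) v - q ^ ((d:ℤ) - 2*i) • v ∈ splitU (fun j => Vs ((d:ℤ) - j)) Vs' d (i+1) := by
    intro i h0 hd v hv
    have e1 : (a⁻¹ • A) v - q ^ ((d:ℤ) - 2*i) • v = a⁻¹ • (A v - θ ((d:ℤ) - i) • v) := by
      rw [smul_sub, smul_smul, LinearMap.smul_apply, hθ ((d:ℤ) - i) (by omega) (by omega),
        show 2*((d:ℤ)-i) - (d:ℤ) = (d:ℤ) - 2*i by ring,
        show a⁻¹ * (a * q ^ ((d:ℤ) - 2*i)) = q ^ ((d:ℤ) - 2*i) by field_simp]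
    rw [e1]
    exact Submodule.smul_mem _ _ (S2.raise hv)
  have mAm'U2 : ∀ i : ℤ, 0 ≤ i → i ≤ (d:ℤ) → ∀ v ∈ splitU (fun j => Vs ((d:ℤ) - j)) Vs' d i,
      (a'⁻¹ • A') v - q ^ ((d:ℤ) - 2*i) • v ∈ splitU (fun j => Vs ((d:ℤ) - j)) Vs' d (i-1) := by
    intro i h0 hd v hv
    have e1 : (a'⁻¹ • A') v - q ^ ((d:ℤ) - 2*i) • v = a'⁻¹ • (A' v - θ' i • v) := by
      rw [smul_sub, smul_smul, LinearMap.smul_apply, hθ' i h0 hd,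
        show a'⁻¹ * (a' * q ^ ((d:ℤ) - 2*i)) = q ^ ((d:ℤ) - 2*i) by field_simp]
    rw [e1]
    exact Submodule.smul_mem _ _ (S2.lower hv)
  have mAmU3 : ∀ i : ℤ, 0 ≤ i → i ≤ (d:ℤ) → ∀ v ∈ splitU Vs (fun j => Vs' ((d:ℤ) - j)) d i,
      (a⁻¹ • A) v - q ^ (2*i - (d:ℤ)) • v ∈ splitU Vs (fun j => Vs' ((d:ℤ) - j)) d (i+1) := by
    intro i h0 hd v hv
    have e1 : (a⁻¹ • A) v - q ^ (2*i - (d:ℤ)) • v = a⁻¹ • (A v - θ i • v) := by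
      rw [smul_sub, smul_smul, LinearMap.smul_apply, hθ i h0 hd,
        show a⁻¹ * (a * q ^ (2*i - (d:ℤ))) = q ^ (2*i - (d:ℤ)) by field_simp]
    rw [e1]
    exact Submodule.smul_mem _ _ (S3.raise hv)
  have mAm'U3 : ∀ i : ℤ, 0 ≤ i → i ≤ (d:ℤ) → ∀ v ∈ splitU Vs (fun j => Vs' ((d:ℤ) - j)) d i,
      (a'⁻¹ • A') v - q ^ (2*i - (d:ℤ)) • v ∈ splitU Vs (fun j => Vs' ((d:ℤ) - j)) d (i-1) := by
    intro i h0 hd v hv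
    have e1 : (a'⁻¹ • A') v - q ^ (2*i - (d:ℤ)) • v = a'⁻¹ • (A' v - θ' ((d:ℤ) - i) • v) := by
      rw [smul_sub, smul_smul, LinearMap.smul_apply, hθ' ((d:ℤ) - i) (by omega) (by omega),
        show (d:ℤ) - 2*((d:ℤ)-i) = 2*i - (d:ℤ) by ring,
        show a'⁻¹ * (a' * q ^ (2*i - (d:ℤ))) = q ^ (2*i - (d:ℤ)) by field_simp]
    rw [e1]
    exact Submodule.smul_mem _ _ (S3.lower hv)
  -- the six "easy" operator identities
  have idA : q • (Kop * (a'⁻¹ • A')) - q⁻¹ • ((a'⁻¹ • A') * Kop)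
      = (q - q⁻¹) • (1 : Module.End K V) := by
    refine rel_eval_raw S1.span (fun i h0 hd v hv => ?_)
    refine block_step dKop hv (mAm'U1 i h0 hd v hv) ?_ ?_
    · rw [hone _ _ (by ring : (2*i - (d:ℤ)) + ((d:ℤ) - 2*i) = 0)]
      ring
    · rw [show 2*(i-1) - (d:ℤ) = (2*i - (d:ℤ)) - 2 by ring]
      exact hstep _
  have idB : q • (Kinv * (a⁻¹ • A)) - q⁻¹ • ((a⁻¹ • A) * Kinv)
      = (q - q⁻¹) • (1 : Module.End K V) := by
    refine rel_eval_raw S1.span (fun i h0 hd v hv => ?_)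
    refine block_step dKinv hv (mAmU1 i h0 hd v hv) ?_ ?_
    · rw [hone _ _ (by ring : ((d:ℤ) - 2*i) + (2*i - (d:ℤ)) = 0)]
      ring
    · rw [show (d:ℤ) - 2*(i+1) = ((d:ℤ) - 2*i) - 2 by ring]
      exact hstep _
  have idE : q • ((a'⁻¹ • A') * (b'⁻¹ • B')) - q⁻¹ • ((b'⁻¹ • B') * (a'⁻¹ • A'))
      = (q - q⁻¹) • (1 : Module.End K V) := by
    refine rel_eval_raw S3.span (fun i h0 hd v hv => ?_)
    refine block_step' dBp' hv (mAm'U3 i h0 hd v hv) ?_ ?_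
    · rw [hone _ _ (by ring : ((d:ℤ) - 2*i) + (2*i - (d:ℤ)) = 0)]
      ring
    · rw [show (d:ℤ) - 2*i = ((d:ℤ) - 2*(i-1)) - 2 by ring]
      exact hstep _
  have idG : q • ((b'⁻¹ • B') * (a⁻¹ • A)) - q⁻¹ • ((a⁻¹ • A) * (b'⁻¹ • B'))
      = (q - q⁻¹) • (1 : Module.End K V) := by
    refine rel_eval_raw S3.span (fun i h0 hd v hv => ?_)
    refine block_step dBp' hv (mAmU3 i h0 hd v hv) ?_ ?_
    · rw [hone _ _ (by ring : ((d:ℤ) - 2*i) + (2*i - (d:ℤ)) = 0)]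
      ring
    · rw [show (d:ℤ) - 2*(i+1) = ((d:ℤ) - 2*i) - 2 by ring]
      exact hstep _
  have idF : q • ((a⁻¹ • A) * (b⁻¹ • B)) - q⁻¹ • ((b⁻¹ • B) * (a⁻¹ • A))
      = (q - q⁻¹) • (1 : Module.End K V) := by
    refine rel_eval_raw S2.span (fun i h0 hd v hv => ?_)
    refine block_step' dBp hv (mAmU2 i h0 hd v hv) ?_ ?_
    · rw [hone _ _ (by ring : (2*i - (d:ℤ)) + ((d:ℤ) - 2*i) = 0)]
      ring
    · rw [show 2*i - (d:ℤ) = (2*(i+1) - (d:ℤ)) - 2 by ring]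
      exact hstep _
  have idH : q • ((b⁻¹ • B) * (a'⁻¹ • A')) - q⁻¹ • ((a'⁻¹ • A') * (b⁻¹ • B))
      = (q - q⁻¹) • (1 : Module.End K V) := by
    refine rel_eval_raw S2.span (fun i h0 hd v hv => ?_)
    refine block_step dBp hv (mAm'U2 i h0 hd v hv) ?_ ?_
    · rw [hone _ _ (by ring : (2*i - (d:ℤ)) + ((d:ℤ) - 2*i) = 0)]
      ring
    · rw [show 2*(i-1) - (d:ℤ) = (2*i - (d:ℤ)) - 2 by ring]
      exact hstep _
  -- q-power conversions
  have hqq2 : ∀ e : ℤ, q * q * q ^ e = q ^ (e+2) := fun e => by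
    rw [show e+2 = 1+(1+e) by ring, zpow_add₀ hq0, zpow_add₀ hq0, zpow_one]
    ring
  have hqinv2 : ∀ e : ℤ, q⁻¹ * q⁻¹ * q ^ e = q ^ (e-2) := fun e => by
    rw [show e-2 = (-1)+((-1)+e) by ring, zpow_add₀ hq0, zpow_add₀ hq0, zpow_neg_one]
    ring
  -- block moves of Kop, Kinv, Bp, Bp' on the eigenspace decompositions
  have blkKop : ∀ j : ℤ, 0 ≤ j → j ≤ (d:ℤ) → ∀ x ∈ Vs' j, Kop x ∈ Vs' j ⊔ Vs' (j-1) := by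
    intro j h0 hd x hx
    have hrel := rel_apply idA x
    rw [dAm' j x hx, map_smul] at hrel
    have h5 := solve_I hq0 hrel
    refine sep_lemma hTD.decompV' dAm' (c := q * q * q ^ ((d:ℤ) - 2*j))
      (m := j) (k := j-1) ?_ ?_
    · intro l hl0 hld hceq
      rw [hqq2] at hceq
      have := hinj _ _ hceq
      omega
    · rw [h5]
      exact neg_mem (le_sup_left (a := Vs' j) (Submodule.smul_mem _ _ hx))
  have blkKinv : ∀ j : ℤ, 0 ≤ j → j ≤ (d:ℤ) → ∀ x ∈ Vs j, Kinv x ∈ Vs j ⊔ Vs (j+1) := by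
    intro j h0 hd x hx
    have hrel := rel_apply idB x
    rw [dAm j x hx, map_smul] at hrel
    have h5 := solve_I hq0 hrel
    refine sep_lemma hTD.decompV dAm (c := q * q * q ^ (2*j - (d:ℤ)))
      (m := j) (k := j+1) ?_ ?_
    · intro l hl0 hld hceq
      rw [hqq2] at hceq
      have := hinj _ _ hceq
      omega
    · rw [h5]
      exact neg_mem (le_sup_left (a := Vs j) (Submodule.smul_mem _ _ hx))
  have blkBp'Y : ∀ j : ℤ, 0 ≤ j → j ≤ (d:ℤ) → ∀ x ∈ Vs' j,
      (b'⁻¹ • B') x ∈ Vs' j ⊔ Vs' (j+1) := by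
    intro j h0 hd x hx
    have hrel := rel_apply idE x
    rw [dAm' j x hx, map_smul] at hrel
    have h5 := solve_II hq0 hrel
    refine sep_lemma hTD.decompV' dAm' (c := q⁻¹ * q⁻¹ * q ^ ((d:ℤ) - 2*j))
      (m := j) (k := j+1) ?_ ?_
    · intro l hl0 hld hceq
      rw [hqinv2] at hceq
      have := hinj _ _ hceq
      omega
    · rw [h5]
      exact le_sup_left (a := Vs' j) (Submodule.smul_mem _ _ hx)
  have blkBp'X : ∀ j : ℤ, 0 ≤ j → j ≤ (d:ℤ) → ∀ x ∈ Vs j,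
      (b'⁻¹ • B') x ∈ Vs j ⊔ Vs (j+1) := by
    intro j h0 hd x hx
    have hrel := rel_apply idG x
    rw [dAm j x hx, map_smul] at hrel
    have h5 := solve_I hq0 hrel
    refine sep_lemma hTD.decompV dAm (c := q * q * q ^ (2*j - (d:ℤ)))
      (m := j) (k := j+1) ?_ ?_
    · intro l hl0 hld hceq
      rw [hqq2] at hceq
      have := hinj _ _ hceq
      omega
    · rw [h5]
      exact neg_mem (le_sup_left (a := Vs j) (Submodule.smul_mem _ _ hx))
  have blkBpX : ∀ j : ℤ, 0 ≤ j → j ≤ (d:ℤ) → ∀ x ∈ Vs j,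
      (b⁻¹ • B) x ∈ Vs j ⊔ Vs (j-1) := by
    intro j h0 hd x hx
    have hrel := rel_apply idF x
    rw [dAm j x hx, map_smul] at hrel
    have h5 := solve_II hq0 hrel
    refine sep_lemma hTD.decompV dAm (c := q⁻¹ * q⁻¹ * q ^ (2*j - (d:ℤ)))
      (m := j) (k := j-1) ?_ ?_
    · intro l hl0 hld hceq
      rw [hqinv2] at hceq
      have := hinj _ _ hceq
      omega
    · rw [h5]
      exact le_sup_left (a := Vs j) (Submodule.smul_mem _ _ hx)
  have blkBpY : ∀ j : ℤ, 0 ≤ j → j ≤ (d:ℤ) → ∀ x ∈ Vs' j,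
      (b⁻¹ • B) x ∈ Vs' j ⊔ Vs' (j-1) := by
    intro j h0 hd x hx
    have hrel := rel_apply idH x
    rw [dAm' j x hx, map_smul] at hrel
    have h5 := solve_I hq0 hrel
    refine sep_lemma hTD.decompV' dAm' (c := q * q * q ^ ((d:ℤ) - 2*j))
      (m := j) (k := j-1) ?_ ?_
    · intro l hl0 hld hceq
      rw [hqq2] at hceq
      have := hinj _ _ hceq
      omega
    · rw [h5]
      exact neg_mem (le_sup_left (a := Vs' j) (Submodule.smul_mem _ _ hx))
  -- flag moves
  have mKopVs' : ∀ m : ℤ, ∀ v ∈ sumIcc Vs' m (d:ℤ), Kop v ∈ sumIcc Vs' (m-1) (d:ℤ) :=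
    fun m => move_flag_down hTD.decompV' blkKop m
  have mKinvVs : ∀ m : ℤ, ∀ v ∈ sumIcc Vs 0 m, Kinv v ∈ sumIcc Vs 0 (m+1) :=
    fun m => move_flag_up hTD.decompV blkKinv m
  have mBp'Vs' : ∀ m : ℤ, ∀ v ∈ sumIcc Vs' 0 m, (b'⁻¹ • B') v ∈ sumIcc Vs' 0 (m+1) :=
    fun m => move_flag_up hTD.decompV' blkBp'Y m
  have mBp'Vs : ∀ m : ℤ, ∀ v ∈ sumIcc Vs 0 m, (b'⁻¹ • B') v ∈ sumIcc Vs 0 (m+1) :=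
    fun m => move_flag_up hTD.decompV blkBp'X m
  have mBpVs : ∀ m : ℤ, ∀ v ∈ sumIcc Vs m (d:ℤ), (b⁻¹ • B) v ∈ sumIcc Vs (m-1) (d:ℤ) :=
    fun m => move_flag_down hTD.decompV blkBpX m
  have mBpVs' : ∀ m : ℤ, ∀ v ∈ sumIcc Vs' m (d:ℤ), (b⁻¹ • B) v ∈ sumIcc Vs' (m-1) (d:ℤ) :=
    fun m => move_flag_down hTD.decompV' blkBpY m
  -- one-step movers for Kop on [D*D] and Kinv on [0*0]
  have mKopU3 : ∀ i : ℤ, 0 ≤ i → i ≤ (d:ℤ) → ∀ v ∈ splitU Vs (fun j => Vs' ((d:ℤ) - j)) d i,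
      Kop v - q ^ (2*i - (d:ℤ)) • v ∈ splitU Vs (fun j => Vs' ((d:ℤ) - j)) d (i+1) := by
    intro i h0 hd v hv
    obtain ⟨hv1, hv2⟩ := mem_splitU.mp hv
    have hvX : v ∈ sumIcc (splitU Vs Vs' d) i (d:ℤ) := by rw [← S1.flagX]; exact hv2
    rw [sumIcc_peel_bot _ hd] at hvX
    obtain ⟨u, hu, x, hx, hsum⟩ := Submodule.mem_sup.mp hvX
    have e1 : Kop v - q ^ (2*i-(d:ℤ)) • v = Kop x - q ^ (2*i-(d:ℤ)) • x := by
      rw [← hsum, map_add, dKop i u hu]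
      module
    have hXpart : Kop v - q ^ (2*i-(d:ℤ)) • v ∈ sumIcc Vs (i+1) (d:ℤ) := by
      rw [e1, S1.flagX]
      exact sub_mem (diag_sumIcc dKop hx) (Submodule.smul_mem _ _ hx)
    have hv1' : v ∈ sumIcc Vs' ((d:ℤ)-i) (d:ℤ) := by
      rw [sumIcc_flip Vs' (d:ℤ) 0 i, sub_zero] at hv1
      exact hv1
    have hYpart : Kop v - q ^ (2*i-(d:ℤ)) • v ∈ sumIcc Vs' ((d:ℤ)-(i+1)) (d:ℤ) := by
      have h1 : Kop v ∈ sumIcc Vs' (((d:ℤ)-i)-1) (d:ℤ) := mKopVs' ((d:ℤ)-i) v hv1'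
      rw [show (d:ℤ)-(i+1) = ((d:ℤ)-i)-1 by ring]
      refine sub_mem h1 (Submodule.smul_mem _ _ ?_)
      exact sumIcc_mono _ (by omega) le_rfl hv1'
    refine mem_splitU.mpr ⟨?_, hXpart⟩
    rw [sumIcc_flip Vs' (d:ℤ) 0 (i+1), sub_zero]
    exact hYpart
  have mKinvU2 : ∀ i : ℤ, 0 ≤ i → i ≤ (d:ℤ) → ∀ v ∈ splitU (fun j => Vs ((d:ℤ) - j)) Vs' d i,
      Kinv v - q ^ ((d:ℤ) - 2*i) • v ∈ splitU (fun j => Vs ((d:ℤ) - j)) Vs' d (i-1) := by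
    intro i h0 hd v hv
    obtain ⟨hv1, hv2⟩ := mem_splitU.mp hv
    have hvY : v ∈ sumIcc (splitU Vs Vs' d) 0 i := by rw [← S1.flagY]; exact hv1
    rw [sumIcc_peel_top _ h0] at hvY
    obtain ⟨x, hx, u, hu, hsum⟩ := Submodule.mem_sup.mp hvY
    have e1 : Kinv v - q ^ ((d:ℤ)-2*i) • v = Kinv x - q ^ ((d:ℤ)-2*i) • x := by
      rw [← hsum, map_add, dKinv i u hu]
      module
    have hYpart : Kinv v - q ^ ((d:ℤ)-2*i) • v ∈ sumIcc Vs' 0 (i-1) := by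
      rw [e1, S1.flagY]
      exact sub_mem (diag_sumIcc dKinv hx) (Submodule.smul_mem _ _ hx)
    have hv2' : v ∈ sumIcc Vs 0 ((d:ℤ)-i) := by
      rw [sumIcc_flip Vs (d:ℤ) i (d:ℤ), sub_self] at hv2
      exact hv2
    have hXpart : Kinv v - q ^ ((d:ℤ)-2*i) • v ∈ sumIcc Vs 0 (((d:ℤ)-i)+1) := by
      refine sub_mem (mKinvVs ((d:ℤ)-i) v hv2') (Submodule.smul_mem _ _ ?_)
      exact sumIcc_mono _ le_rfl (by omega) hv2'
    refine mem_splitU.mpr ⟨hYpart, ?_⟩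
    rw [sumIcc_flip Vs (d:ℤ) (i-1) (d:ℤ), sub_self]
    rwa [show (d:ℤ)-(i-1) = ((d:ℤ)-i)+1 by ring]
  -- the remaining two relations
  have idC : q • ((b'⁻¹ • B') * Kop) - q⁻¹ • (Kop * (b'⁻¹ • B'))
      = (q - q⁻¹) • (1 : Module.End K V) := by
    refine rel_eval_raw S3.span (fun i h0 hd v hv => ?_)
    refine block_step dBp' hv (mKopU3 i h0 hd v hv) ?_ ?_
    · rw [hone _ _ (by ring : ((d:ℤ) - 2*i) + (2*i - (d:ℤ)) = 0)]
      ring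
    · rw [show (d:ℤ) - 2*(i+1) = ((d:ℤ) - 2*i) - 2 by ring]
      exact hstep _
  have idD : q • ((b⁻¹ • B) * Kinv) - q⁻¹ • (Kinv * (b⁻¹ • B))
      = (q - q⁻¹) • (1 : Module.End K V) := by
    refine rel_eval_raw S2.span (fun i h0 hd v hv => ?_)
    refine block_step dBp hv (mKinvU2 i h0 hd v hv) ?_ ?_
    · rw [hone _ _ (by ring : (2*i - (d:ℤ)) + ((d:ℤ) - 2*i) = 0)]
      ring
    · rw [show 2*(i-1) - (d:ℤ) = (2*i - (d:ℤ)) - 2 by ring]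
      exact hstep _
  -- tridiagonal action of B' on [0*0] and of B on [D*D]
  have tBp'U2 : ∀ i : ℤ, 0 ≤ i → i ≤ (d:ℤ) → ∀ v ∈ splitU (fun j => Vs ((d:ℤ) - j)) Vs' d i,
      (b'⁻¹ • B') v ∈ sumIcc (splitU (fun j => Vs ((d:ℤ) - j)) Vs' d) (i-1) (i+1) := by
    intro i h0 hd v hv
    obtain ⟨hv1, hv2⟩ := mem_splitU.mp hv
    have hv2' : v ∈ sumIcc Vs 0 ((d:ℤ)-i) := by
      rw [sumIcc_flip Vs (d:ℤ) i (d:ℤ), sub_self] at hv2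
      exact hv2
    have h1 : (b'⁻¹ • B') v ∈ sumIcc Vs' 0 (i+1) := mBp'Vs' i v hv1
    have h2 : (b'⁻¹ • B') v ∈ sumIcc Vs 0 (((d:ℤ)-i)+1) := mBp'Vs ((d:ℤ)-i) v hv2'
    rw [← S2.interval (i-1) (i+1)]
    refine Submodule.mem_inf.mpr ⟨h1, ?_⟩
    rw [sumIcc_flip Vs (d:ℤ) (i-1) (d:ℤ), sub_self]
    rwa [show (d:ℤ)-(i-1) = ((d:ℤ)-i)+1 by ring]
  have tBpU3 : ∀ i : ℤ, 0 ≤ i → i ≤ (d:ℤ) → ∀ v ∈ splitU Vs (fun j => Vs' ((d:ℤ) - j)) d i,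
      (b⁻¹ • B) v ∈ sumIcc (splitU Vs (fun j => Vs' ((d:ℤ) - j)) d) (i-1) (i+1) := by
    intro i h0 hd v hv
    obtain ⟨hv1, hv2⟩ := mem_splitU.mp hv
    have hv1' : v ∈ sumIcc Vs' ((d:ℤ)-i) (d:ℤ) := by
      rw [sumIcc_flip Vs' (d:ℤ) 0 i, sub_zero] at hv1
      exact hv1
    have h1 : (b⁻¹ • B) v ∈ sumIcc Vs' (((d:ℤ)-i)-1) (d:ℤ) := mBpVs' ((d:ℤ)-i) v hv1'
    have h2 : (b⁻¹ • B) v ∈ sumIcc Vs (i-1) (d:ℤ) := mBpVs i v hv2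
    rw [← S3.interval (i-1) (i+1)]
    refine Submodule.mem_inf.mpr ⟨?_, h2⟩
    rw [sumIcc_flip Vs' (d:ℤ) 0 (i+1), sub_zero]
    rwa [show (d:ℤ)-(i+1) = ((d:ℤ)-i)-1 by ring]
  -- q-Serre coefficient identities
  have hupA : ∀ i : ℤ, q ^ (2*(i+1) - (d:ℤ)) = (q*q) * q ^ (2*i - (d:ℤ)) := fun i => by
    rw [show 2*(i+1) - (d:ℤ) = 1+(1+(2*i - (d:ℤ))) by ring, zpow_add₀ hq0, zpow_add₀ hq0,
      zpow_one]
    ring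
  have hdnA : ∀ i : ℤ, q ^ (2*(i-1) - (d:ℤ)) = q⁻¹*q⁻¹ * q ^ (2*i - (d:ℤ)) := fun i => by
    rw [show 2*(i-1) - (d:ℤ) = (-1)+((-1)+(2*i - (d:ℤ))) by ring, zpow_add₀ hq0,
      zpow_add₀ hq0, zpow_neg_one]
    ring
  have hupB : ∀ i : ℤ, q ^ ((d:ℤ) - 2*(i+1)) = q⁻¹*q⁻¹ * q ^ ((d:ℤ) - 2*i) := fun i => by
    rw [show (d:ℤ) - 2*(i+1) = (-1)+((-1)+((d:ℤ) - 2*i)) by ring, zpow_add₀ hq0,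
      zpow_add₀ hq0, zpow_neg_one]
    ring
  have hdnB : ∀ i : ℤ, q ^ ((d:ℤ) - 2*(i-1)) = (q*q) * q ^ ((d:ℤ) - 2*i) := fun i => by
    rw [show (d:ℤ) - 2*(i-1) = 1+(1+((d:ℤ) - 2*i)) by ring, zpow_add₀ hq0, zpow_add₀ hq0,
      zpow_one]
    ring
  have hup1 : ∀ i : ℤ, (q ^ (2*(i+1) - (d:ℤ)))^3
      - qInt q 3 * (q ^ (2*i - (d:ℤ)) * (q ^ (2*(i+1) - (d:ℤ)))^2)
      + qInt q 3 * ((q ^ (2*i - (d:ℤ)))^2 * q ^ (2*(i+1) - (d:ℤ)))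
      - (q ^ (2*i - (d:ℤ)))^3 = 0 := fun i =>
    serre_coef hq0 hqq _ _ (zpow_ne_zero _ hq0) (Or.inl (hupA i))
  have hdn1 : ∀ i : ℤ, (q ^ (2*(i-1) - (d:ℤ)))^3
      - qInt q 3 * (q ^ (2*i - (d:ℤ)) * (q ^ (2*(i-1) - (d:ℤ)))^2)
      + qInt q 3 * ((q ^ (2*i - (d:ℤ)))^2 * q ^ (2*(i-1) - (d:ℤ)))
      - (q ^ (2*i - (d:ℤ)))^3 = 0 := fun i =>
    serre_coef hq0 hqq _ _ (zpow_ne_zero _ hq0) (Or.inr (hdnA i))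
  have hup2 : ∀ i : ℤ, (q ^ ((d:ℤ) - 2*(i+1)))^3
      - qInt q 3 * (q ^ ((d:ℤ) - 2*i) * (q ^ ((d:ℤ) - 2*(i+1)))^2)
      + qInt q 3 * ((q ^ ((d:ℤ) - 2*i))^2 * q ^ ((d:ℤ) - 2*(i+1)))
      - (q ^ ((d:ℤ) - 2*i))^3 = 0 := fun i =>
    serre_coef hq0 hqq _ _ (zpow_ne_zero _ hq0) (Or.inr (hupB i))
  have hdn2 : ∀ i : ℤ, (q ^ ((d:ℤ) - 2*(i-1)))^3
      - qInt q 3 * (q ^ ((d:ℤ) - 2*i) * (q ^ ((d:ℤ) - 2*(i-1)))^2)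
      + qInt q 3 * ((q ^ ((d:ℤ) - 2*i))^2 * q ^ ((d:ℤ) - 2*(i-1)))
      - (q ^ ((d:ℤ) - 2*i))^3 = 0 := fun i =>
    serre_coef hq0 hqq _ _ (zpow_ne_zero _ hq0) (Or.inl (hdnB i))
  -- the four q-Serre relations
  have hSm10 : (a⁻¹ • A)^3 * (a'⁻¹ • A') - qInt q 3 • ((a⁻¹ • A)^2 * (a'⁻¹ • A') * (a⁻¹ • A))
      + qInt q 3 • ((a⁻¹ • A) * (a'⁻¹ • A') * (a⁻¹ • A)^2) - (a'⁻¹ • A') * (a⁻¹ • A)^3 = 0 := by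
    refine serre_eval (ξ := fun j => q ^ (2*j - (d:ℤ))) hTD.decompV.sumIcc_top dAm
      (fun i h0 hd v hv => ?_) hup1 hdn1
    rw [LinearMap.smul_apply]
    exact Submodule.smul_mem _ _ (S1.tridX i v hv)
  have hSm01 : (a'⁻¹ • A')^3 * (a⁻¹ • A) - qInt q 3 • ((a'⁻¹ • A')^2 * (a⁻¹ • A) * (a'⁻¹ • A'))
      + qInt q 3 • ((a'⁻¹ • A') * (a⁻¹ • A) * (a'⁻¹ • A')^2) - (a⁻¹ • A) * (a'⁻¹ • A')^3 = 0 := by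
    refine serre_eval (ξ := fun j => q ^ ((d:ℤ) - 2*j)) hTD.decompV'.sumIcc_top dAm'
      (fun i h0 hd v hv => ?_) hup2 hdn2
    rw [LinearMap.smul_apply]
    exact Submodule.smul_mem _ _ (S1.tridY i v hv)
  have hSp10 : (b⁻¹ • B)^3 * (b'⁻¹ • B') - qInt q 3 • ((b⁻¹ • B)^2 * (b'⁻¹ • B') * (b⁻¹ • B))
      + qInt q 3 • ((b⁻¹ • B) * (b'⁻¹ • B') * (b⁻¹ • B)^2) - (b'⁻¹ • B') * (b⁻¹ • B)^3 = 0 :=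
    serre_eval (ξ := fun j => q ^ (2*j - (d:ℤ))) S2.span dBp tBp'U2 hup1 hdn1
  have hSp01 : (b'⁻¹ • B')^3 * (b⁻¹ • B) - qInt q 3 • ((b'⁻¹ • B')^2 * (b⁻¹ • B) * (b'⁻¹ • B'))
      + qInt q 3 • ((b'⁻¹ • B') * (b⁻¹ • B) * (b'⁻¹ • B')^2) - (b⁻¹ • B) * (b'⁻¹ • B')^3 = 0 :=
    serre_eval (ξ := fun j => q ^ ((d:ℤ) - 2*j)) S3.span dBp' tBpU3 hup2 hdn2
  -- assembly
  refine ⟨?_, ?_⟩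
  · refine
      { k_kinv := ?_, kinv_k := ?_, central_yp := ?_, central_ym := ?_,
        central_k := ?_, central_kinv := ?_, rel_yp_k := ?_, rel_k_ym := ?_,
        rel_ym_yp := ?_, rel_yp_ym := ?_, serre_p := ?_, serre_m := ?_ }
    · intro i
      fin_cases i
      · simpa using hKinv1
      · simpa using hKinv2
    · intro i
      fin_cases i
      · simpa using hKinv2
      · simpa using hKinv1
    · intro i
      simp only [Matrix.cons_val_zero, Matrix.cons_val_one, Matrix.head_cons]
      rw [hKinv1, one_mul, mul_one]
    · intro i
      simp only [Matrix.cons_val_zero, Matrix.cons_val_one, Matrix.head_cons]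
      rw [hKinv1, one_mul, mul_one]
    · intro i
      simp only [Matrix.cons_val_zero, Matrix.cons_val_one, Matrix.head_cons]
      rw [hKinv1, one_mul, mul_one]
    · intro i
      simp only [Matrix.cons_val_zero, Matrix.cons_val_one, Matrix.head_cons]
      rw [hKinv1, one_mul, mul_one]
    · intro i
      fin_cases i
      · simpa using scale_rel hqq idC
      · simpa using scale_rel hqq idD
    · intro i
      fin_cases i
      · simpa using scale_rel hqq idA
      · simpa using scale_rel hqq idB
    · intro i
      fin_cases i
      · simpa using scale_rel hqq idE
      · simpa using scale_rel hqq idF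
    · intro i j hij
      fin_cases i <;> fin_cases j
      · simp at hij
      · simp only [Matrix.cons_val_zero, Matrix.cons_val_one, Matrix.head_cons]
        rw [hKinv2]
        exact scale_rel hqq idG
      · simp only [Matrix.cons_val_zero, Matrix.cons_val_one, Matrix.head_cons]
        rw [hKinv2]
        exact scale_rel hqq idH
      · simp at hij
    · intro i j hij
      fin_cases i <;> fin_cases j
      · simp at hij
      · simpa using hSp01
      · simpa using hSp10
      · simp at hij
    · intro i j hij
      fin_cases i <;> fin_cases j
      · simp at hij
      · simpa using hSm01
      · simpa using hSm10
      · simp at hij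
  · intro W h1 h2 h3 h4 h5 h6
    refine hTD.irred W ?_ ?_
    · rintro x ⟨w, hw, rfl⟩
      have h7 : (a⁻¹ • A) w ∈ W := h4 (Submodule.mem_map_of_mem hw)
      have e : A w = a • ((a⁻¹ • A) w) := by
        rw [LinearMap.smul_apply, smul_smul, mul_inv_cancel₀ ha, one_smul]
      rw [e]
      exact Submodule.smul_mem _ _ h7
    · rintro x ⟨w, hw, rfl⟩
      have h7 : (a'⁻¹ • A') w ∈ W := h3 (Submodule.mem_map_of_mem hw)
      have e : A' w = a' • ((a'⁻¹ • A') w) := by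
        rw [LinearMap.smul_apply, smul_smul, mul_inv_cancel₀ ha', one_smul]
      rw [e]
      exact Submodule.smul_mem _ _ h7
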